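/- arXiv:2103.15382 — 8 statements merged into one kernel-verified Lean document; each statement's English description precedes it below -/
import Mathlib

section
/- Let ψ satisfy (A) and let v ∈ H²₀(0,1) be symmetric around 1/2 (v(x)=v(1-x)) with v ≥ ψ, and suppose W(v) ≤ 4c₁² for some c₁ ∈ (0, c₀). Then max_{x∈[0,1]} |v'(x)| ≤ G⁻¹(c₁/2). -/
open MeasureTheory

noncomputable def c0 : ℝ := ∫ τ : ℝ, (1 + τ^2) ^ (-(5/4) : ℝ)

noncomputable def G (t : ℝ) : ℝ := ∫ τ in (0:ℝ)..t, (1 + τ^2) ^ (-(5/4) : ℝ)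

noncomputable def Ginv : ℝ → ℝ := Function.invFun G

namespace GradAux

noncomputable def f0 (τ : ℝ) : ℝ := (1 + τ^2) ^ (-(5/4) : ℝ)

lemma base_pos (τ : ℝ) : (0:ℝ) < 1 + τ^2 := by positivity

lemma f0_pos (τ : ℝ) : 0 < f0 τ := Real.rpow_pos_of_pos (base_pos τ) _

lemma f0_cont : Continuous f0 := by
  apply Continuous.rpow_const (by continuity)
  intro x; exact Or.inl (ne_of_gt (base_pos x))

lemma f0_even (τ : ℝ) : f0 (-τ) = f0 τ := by simp [f0]

lemma f0_integrable : Integrable f0 := by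
  refine integrable_inv_one_add_sq.mono f0_cont.aestronglyMeasurable
    (Filter.Eventually.of_forall fun x => ?_)
  rw [Real.norm_eq_abs, Real.norm_eq_abs, abs_of_pos (f0_pos x),
    abs_of_pos (by positivity : (0:ℝ) < (1 + x^2)⁻¹)]
  calc f0 x ≤ (1 + x^2) ^ (-1 : ℝ) :=
        Real.rpow_le_rpow_of_exponent_le (by nlinarith [sq_nonneg x]) (by norm_num)
    _ = (1 + x^2)⁻¹ := by rw [Real.rpow_neg_one]

lemma G_eq (t : ℝ) : G t = ∫ τ in (0:ℝ)..t, f0 τ := rfl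

lemma G_hasDerivAt (t : ℝ) : HasDerivAt G (f0 t) t :=
  intervalIntegral.integral_hasDerivAt_right (f0_cont.intervalIntegrable 0 t)
    (f0_cont.stronglyMeasurableAtFilter _ _) f0_cont.continuousAt

lemma G_cont : Continuous G :=
  continuous_iff_continuousAt.2 fun t => (G_hasDerivAt t).continuousAt

lemma G_zero : G 0 = 0 := intervalIntegral.integral_same

lemma G_strictMono : StrictMono G := by
  intro a b hab
  have hsum : G a + ∫ τ in a..b, f0 τ = G b :=
    intervalIntegral.integral_add_adjacent_intervals
      (f0_cont.intervalIntegrable 0 a) (f0_cont.intervalIntegrable a b)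
  have hpos : 0 < ∫ τ in a..b, f0 τ :=
    intervalIntegral.intervalIntegral_pos_of_pos (f0_cont.intervalIntegrable a b) f0_pos hab
  linarith

lemma G_neg (t : ℝ) : G (-t) = - G t := by
  have h1 : (∫ τ in (0:ℝ)..(-t), f0 (-τ)) = ∫ τ in (t:ℝ)..(0:ℝ), f0 τ := by
    simpa using intervalIntegral.integral_comp_neg (a := (0:ℝ)) (b := -t) (f := f0)
  have h2 : (∫ τ in (0:ℝ)..(-t), f0 (-τ)) = ∫ τ in (0:ℝ)..(-t), f0 τ :=
    intervalIntegral.integral_congr fun τ _ => f0_even τ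
  rw [G_eq, G_eq, ← h2, h1, intervalIntegral.integral_symm]

lemma G_abs (t : ℝ) : G |t| = |G t| := by
  rcases le_or_gt 0 t with h | h
  · rw [abs_of_nonneg h, abs_of_nonneg]
    rw [← G_zero]; exact G_strictMono.monotone h
  · rw [abs_of_neg h, abs_of_neg, G_neg]
    rw [← G_zero]; exact G_strictMono h

lemma half_integral : (∫ x in Set.Ioi (0:ℝ), f0 x) = c0 / 2 := by
  have h1 : (∫ x in Set.Iic (0:ℝ), f0 x) + ∫ x in Set.Ioi (0:ℝ), f0 x = c0 :=
    intervalIntegral.integral_Iic_add_Ioi f0_integrable.integrableOn f0_integrable.integrableOn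
  have h2 : (∫ x in Set.Iic (0:ℝ), f0 x) = ∫ x in Set.Ioi (0:ℝ), f0 x := by
    have := integral_comp_neg_Iic (0:ℝ) f0
    simp only [neg_zero] at this
    rw [← this]
    exact setIntegral_congr_fun measurableSet_Iic fun x _ => (f0_even x).symm
  linarith

lemma exists_G {c : ℝ} (h0 : 0 ≤ c) (h : c < c0 / 2) : ∃ t, 0 ≤ t ∧ G t = c := by
  have htend : Filter.Tendsto G Filter.atTop (nhds (c0 / 2)) := by
    rw [← half_integral]
    exact intervalIntegral_tendsto_integral_Ioi 0 f0_integrable.integrableOn Filter.tendsto_id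
  obtain ⟨t₀, ht₀c, ht₀0⟩ :=
    ((htend.eventually (lt_mem_nhds h)).and (Filter.eventually_ge_atTop (0:ℝ))).exists
  have hIVT := intermediate_value_Icc ht₀0 G_cont.continuousOn
  have hc : c ∈ Set.Icc (G 0) (G t₀) := ⟨by rw [G_zero]; exact h0, le_of_lt ht₀c⟩
  obtain ⟨t, ht, htG⟩ := hIVT hc
  exact ⟨t, ht.1, htG⟩

lemma sqrt_cs {x y A B : ℝ} (hx : 0 ≤ x) (hy : 0 ≤ y) (hA : 0 ≤ A) (hB : 0 ≤ B) :
    Real.sqrt (x * A) + Real.sqrt (y * B) ≤ Real.sqrt ((x + y) * (A + B)) := by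
  rw [Real.le_sqrt (by positivity) (by positivity)]
  have h1 : Real.sqrt (x * A) * Real.sqrt (y * B) = Real.sqrt (x * B) * Real.sqrt (y * A) := by
    rw [← Real.sqrt_mul (mul_nonneg hx hA), ← Real.sqrt_mul (mul_nonneg hx hB)]
    ring_nf
  nlinarith [Real.sq_sqrt (mul_nonneg hx hA), Real.sq_sqrt (mul_nonneg hy hB),
    Real.sq_sqrt (mul_nonneg hx hB), Real.sq_sqrt (mul_nonneg hy hA),
    sq_nonneg (Real.sqrt (x * B) - Real.sqrt (y * A)), Real.sqrt_nonneg (x * A),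
    Real.sqrt_nonneg (y * B)]

lemma cs_integral {w : ℝ → ℝ} {a b : ℝ} (hab : a ≤ b)
    (hw2 : IntervalIntegrable (fun x => w x ^ 2) volume a b)
    (hw : IntervalIntegrable w volume a b) :
    |∫ x in a..b, w x| ≤ Real.sqrt ((b - a) * ∫ x in a..b, w x ^ 2) := by
  set I := ∫ x in a..b, |w x| with hI
  set S := ∫ x in a..b, w x ^ 2 with hS
  have hIa : |∫ x in a..b, w x| ≤ I := intervalIntegral.abs_integral_le_integral_abs hab
  have hI0 : 0 ≤ I := intervalIntegral.integral_nonneg hab fun x _ => abs_nonneg _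
  have hS0 : 0 ≤ S := intervalIntegral.integral_nonneg hab fun x _ => sq_nonneg _
  rcases eq_or_lt_of_le hab with rfl | hlt
  · simp only [intervalIntegral.integral_same] at hIa ⊢
    simpa using hIa.trans (Real.sqrt_nonneg _)
  · set L := b - a with hL
    have hL0 : 0 < L := by simp only [hL]; linarith
    set m := I / L with hm
    have hmL : m * L = I := div_mul_cancel₀ I hL0.ne'
    have habs : IntervalIntegrable (fun x => |w x|) volume a b := hw.abs
    have key : 0 ≤ ∫ x in a..b, (|w x| - m) ^ 2 :=
      intervalIntegral.integral_nonneg hab fun x _ => sq_nonneg _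
    have expand : (∫ x in a..b, (|w x| - m) ^ 2) = S - 2 * m * I + m ^ 2 * L := by
      have heq : Set.EqOn (fun x => (|w x| - m) ^ 2)
          (fun x => (w x ^ 2 - 2 * m * |w x|) + m ^ 2) (Set.uIcc a b) := by
        intro x _
        simp only
        rw [sub_sq, sq_abs]; ring
      rw [intervalIntegral.integral_congr heq,
        intervalIntegral.integral_add (hw2.sub ((habs.const_mul (2 * m))))
          intervalIntegrable_const,
        intervalIntegral.integral_sub hw2 (habs.const_mul (2 * m)),
        intervalIntegral.integral_const_mul, intervalIntegral.integral_const]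
      simp only [smul_eq_mul, ← hI, ← hS, hL]
      ring
    have hIS : I ^ 2 ≤ L * S := by nlinarith [key, expand, hmL]
    refine hIa.trans ?_
    rw [Real.le_sqrt hI0 (by positivity)]
    exact hIS

end GradAux

/-- Lemma 2.2: gradient bound for symmetric admissible functions with small energy. -/
theorem gradient_bound_symmetric (ψ v v' v'' : ℝ → ℝ) (c₁ : ℝ)
    -- condition (A) on the obstacle
    (hψc : ContinuousOn ψ (Set.Icc (0:ℝ) 1))
    (hψsym : ∀ x ∈ Set.Ioo (0:ℝ) 1, ψ x = ψ (1 - x))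
    (hψneg : ∃ σ > (0:ℝ), (∀ x ∈ Set.Ico (0:ℝ) σ, ψ x < 0) ∧
      ∀ x ∈ Set.Ioc (1 - σ) 1, ψ x < 0)
    (hψpos : ∃ x₀ ∈ Set.Ioo (0:ℝ) 1, 0 < ψ x₀)
    -- v ∈ H²₀(0,1), symmetric, above the obstacle
    (hv : ∀ x, HasDerivAt v (v' x) x)
    (hv' : ∀ x, HasDerivAt v' (v'' x) x)
    (hv'c : Continuous v')
    (hv0 : v 0 = 0) (hv1 : v 1 = 0) (hv'0 : v' 0 = 0) (hv'1 : v' 1 = 0)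
    (hsym : ∀ x, v x = v (1 - x))
    (hge : ∀ x ∈ Set.Icc (0:ℝ) 1, ψ x ≤ v x)
    -- energy bound
    (hWint : IntervalIntegrable (fun x => v'' x ^ 2 * (1 + v' x ^ 2) ^ (-(5/2) : ℝ)) volume 0 1)
    (hc₁ : c₁ ∈ Set.Ioo (0:ℝ) c0)
    (hW : (∫ x in (0:ℝ)..1, v'' x ^ 2 * (1 + v' x ^ 2) ^ (-(5/2) : ℝ)) ≤ 4 * c₁ ^ 2) :
    ∀ x ∈ Set.Icc (0:ℝ) 1, |v' x| ≤ Ginv (c₁ / 2) := by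
  classical
  -- antisymmetry of v'
  have hanti : ∀ y : ℝ, v' (1 - y) = - v' y := by
    intro y
    have hin : HasDerivAt (fun z : ℝ => 1 - z) (-1 : ℝ) y := by
      simpa using (hasDerivAt_id' y).const_sub (1:ℝ)
    have h1 : HasDerivAt (fun z : ℝ => v (1 - z)) (v' (1 - y) * (-1)) y :=
      (hv (1 - y)).comp y hin
    have h2 : (fun z : ℝ => v (1 - z)) = v := funext fun z => (hsym z).symm
    rw [h2] at h1
    have h3 := (hv y).unique h1
    linarith
  have hv''sym : ∀ y : ℝ, v'' (1 - y) = v'' y := by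
    intro y
    have hin : HasDerivAt (fun z : ℝ => 1 - z) (-1 : ℝ) y := by
      simpa using (hasDerivAt_id' y).const_sub (1:ℝ)
    have h1 : HasDerivAt (fun z : ℝ => -v' (1 - z)) (-(v'' (1 - y) * (-1))) y :=
      ((hv' (1 - y)).comp y hin).neg
    have h2 : (fun z : ℝ => -v' (1 - z)) = v' := funext fun z => by rw [hanti z, neg_neg]
    rw [h2] at h1
    have h3 := (hv' y).unique h1
    linarith
  have hmid : v' (1/2 : ℝ) = 0 := by
    have := hanti (1/2)
    norm_num at this
    linarith
  set w : ℝ → ℝ := fun z => v'' z * GradAux.f0 (v' z) with hw_def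
  have hwsq : ∀ z, w z ^ 2 = v'' z ^ 2 * (1 + v' z ^ 2) ^ (-(5/2) : ℝ) := by
    intro z
    have hb : (0:ℝ) ≤ 1 + v' z ^ 2 := by positivity
    have hf : GradAux.f0 (v' z) ^ 2 = (1 + v' z ^ 2) ^ (-(5/2) : ℝ) := by
      rw [GradAux.f0, ← Real.rpow_natCast ((1 + v' z ^ 2) ^ (-(5/4):ℝ)) 2,
        ← Real.rpow_mul hb]
      norm_num
    simp only [hw_def, mul_pow, hf]
  have hWint' : IntervalIntegrable (fun x => w x ^ 2) volume 0 1 := by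
    simpa only [hwsq] using hWint
  have hW' : (∫ x in (0:ℝ)..1, w x ^ 2) ≤ 4 * c₁ ^ 2 := by
    have : (∫ x in (0:ℝ)..1, w x ^ 2)
        = ∫ x in (0:ℝ)..1, v'' x ^ 2 * (1 + v' x ^ 2) ^ (-(5/2) : ℝ) := by
      simp only [hwsq]
    rw [this]; exact hW
  have hsub : ∀ a b : ℝ, 0 ≤ a → a ≤ 1 → 0 ≤ b → b ≤ 1 →
      Set.uIcc a b ⊆ Set.uIcc (0:ℝ) 1 := by
    intro a b ha ha' hb hb'
    exact Set.uIcc_subset_uIcc (Set.mem_uIcc.mpr (Or.inl ⟨ha, ha'⟩))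
      (Set.mem_uIcc.mpr (Or.inl ⟨hb, hb'⟩))
  have hvm : Measurable v'' := by
    have : v'' = deriv v' := funext fun z => ((hv' z).deriv).symm
    rw [this]; exact measurable_deriv v'
  have hwmeas : StronglyMeasurable w :=
    (hvm.mul ((GradAux.f0_cont.comp hv'c).measurable)).stronglyMeasurable
  have hwm : ∀ a b : ℝ, Set.uIcc a b ⊆ Set.uIcc (0:ℝ) 1 → IntervalIntegrable w volume a b := by
    intro a b hs
    have h2 : IntervalIntegrable (fun x => w x ^ 2) volume a b := hWint'.mono_set hs
    refine (h2.add (intervalIntegrable_const (c := (1:ℝ)))).mono_fun'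
      hwmeas.aestronglyMeasurable ?_
    refine Filter.Eventually.of_forall fun x => ?_
    simp only [Real.norm_eq_abs]
    nlinarith [sq_nonneg (|w x| - 1), sq_abs (w x), abs_nonneg (w x)]
  have hgderiv : ∀ z : ℝ, HasDerivAt (fun y => G (v' y)) (w z) z := by
    intro z
    have h := (GradAux.G_hasDerivAt (v' z)).comp z (hv' z)
    have : GradAux.f0 (v' z) * v'' z = w z := by rw [hw_def]; ring
    rw [this] at h
    exact h
  have hFTC : ∀ a b : ℝ, Set.uIcc a b ⊆ Set.uIcc (0:ℝ) 1 →
      G (v' b) - G (v' a) = ∫ z in a..b, w z := fun a b hs =>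
    (intervalIntegral.integral_eq_sub_of_hasDerivAt (fun z _ => hgderiv z) (hwm a b hs)).symm
  have hwsqsym : ∀ z : ℝ, w (1 - z) ^ 2 = w z ^ 2 := by
    intro z
    rw [hwsq, hwsq, hv''sym z, hanti z, neg_sq]
  have hhalf : (∫ z in (0:ℝ)..(1/2:ℝ), w z ^ 2) ≤ 2 * c₁ ^ 2 := by
    have e0 : (∫ z in (0:ℝ)..(1/2:ℝ), w z ^ 2)
        = ∫ z in (0:ℝ)..(1/2:ℝ), (fun u => w u ^ 2) (1 - z) :=
      intervalIntegral.integral_congr fun z _ => (hwsqsym z).symm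
    have e1 := intervalIntegral.integral_comp_sub_left
      (a := (0:ℝ)) (b := (1/2:ℝ)) (fun u => w u ^ 2) 1
    norm_num at e1
    have e2 : (∫ z in (0:ℝ)..(1/2:ℝ), w z ^ 2) + (∫ z in (1/2:ℝ)..(1:ℝ), w z ^ 2)
        = ∫ z in (0:ℝ)..(1:ℝ), w z ^ 2 :=
      intervalIntegral.integral_add_adjacent_intervals
        (hWint'.mono_set (hsub 0 (1/2) le_rfl (by norm_num) (by norm_num) (by norm_num)))
        (hWint'.mono_set (hsub (1/2) 1 (by norm_num) (by norm_num) (by norm_num) le_rfl))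
    have e3 : (∫ z in (1/2:ℝ)..(1:ℝ), w z ^ 2) = ∫ z in (0:ℝ)..(1/2:ℝ), w z ^ 2 := by
      rw [e0, e1]
    linarith
  have key : ∀ y : ℝ, 0 ≤ y → y ≤ 1/2 → |v' y| ≤ Ginv (c₁ / 2) := by
    intro y hy0 hy2
    have hy1 : y ≤ 1 := by linarith
    set A := ∫ z in (0:ℝ)..y, w z ^ 2 with hA
    set B := ∫ z in y..(1/2:ℝ), w z ^ 2 with hB
    have hA0 : 0 ≤ A := intervalIntegral.integral_nonneg hy0 fun _ _ => sq_nonneg _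
    have hB0 : 0 ≤ B := intervalIntegral.integral_nonneg hy2 fun _ _ => sq_nonneg _
    have hs1 : Set.uIcc (0:ℝ) y ⊆ Set.uIcc (0:ℝ) 1 := hsub 0 y le_rfl (by norm_num) hy0 hy1
    have hs2 : Set.uIcc y (1/2:ℝ) ⊆ Set.uIcc (0:ℝ) 1 :=
      hsub y (1/2) hy0 hy1 (by norm_num) (by norm_num)
    have hAB : A + B = ∫ z in (0:ℝ)..(1/2:ℝ), w z ^ 2 :=
      intervalIntegral.integral_add_adjacent_intervals
        (hWint'.mono_set hs1) (hWint'.mono_set hs2)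
    have hG1 : G (v' y) = ∫ z in (0:ℝ)..y, w z := by
      have h := hFTC 0 y hs1
      rw [hv'0, GradAux.G_zero] at h
      linarith
    have hG2 : G (v' y) = - ∫ z in y..(1/2:ℝ), w z := by
      have h := hFTC y (1/2) hs2
      rw [hmid, GradAux.G_zero] at h
      linarith
    have c1 : |G (v' y)| ≤ Real.sqrt (y * A) := by
      rw [hG1]
      have h := GradAux.cs_integral hy0 (hWint'.mono_set hs1) (hwm 0 y hs1)
      simpa using h
    have c2 : |G (v' y)| ≤ Real.sqrt ((1/2 - y) * B) := by
      rw [hG2, abs_neg]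
      exact GradAux.cs_integral hy2 (hWint'.mono_set hs2) (hwm y (1/2) hs2)
    have c3 : Real.sqrt (y * A) + Real.sqrt ((1/2 - y) * B)
        ≤ Real.sqrt ((y + (1/2 - y)) * (A + B)) :=
      GradAux.sqrt_cs hy0 (by linarith) hA0 hB0
    have c4 : (y + (1/2 - y)) * (A + B) ≤ c₁ ^ 2 := by
      have : A + B ≤ 2 * c₁ ^ 2 := by rw [hAB]; exact hhalf
      nlinarith
    have c5 : Real.sqrt ((y + (1/2 - y)) * (A + B)) ≤ c₁ := by
      calc Real.sqrt ((y + (1/2 - y)) * (A + B)) ≤ Real.sqrt (c₁ ^ 2) :=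
            Real.sqrt_le_sqrt c4
        _ = c₁ := Real.sqrt_sq hc₁.1.le
    have c6 : |G (v' y)| ≤ c₁ / 2 := by linarith
    obtain ⟨t, ht0, htG⟩ := GradAux.exists_G (c := c₁ / 2)
      (by linarith [hc₁.1]) (by linarith [hc₁.2])
    have hGinv : Ginv (c₁ / 2) = t := by
      rw [← htG]
      exact Function.leftInverse_invFun GradAux.G_strictMono.injective t
    rw [hGinv]
    have hle : G |v' y| ≤ G t := by rw [GradAux.G_abs, htG]; exact c6
    exact GradAux.G_strictMono.le_iff_le.mp hle
  intro x hx
  rcases le_or_gt x (1/2) with h | h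
  · exact key x hx.1 h
  · have h1 := key (1 - x) (by linarith [hx.2]) (by linarith)
    have h2 : v' x = - v' (1 - x) := by
      have := hanti (1 - x)
      norm_num at this
      linarith
    rw [h2, abs_neg]
    exact h1
end

section
/- Let v ∈ H²₀(0,1) (so v(0)=v(1)=v'(0)=v'(1)=0) satisfy W(v) ≤ c₂² for some c₂ ∈ (0, c₀). Then max_{x∈[0,1]} |v'(x)| ≤ G⁻¹(c₂/2). -/
open MeasureTheory

noncomputable def ff (τ : ℝ) : ℝ := (1 + τ^2) ^ (-(5/4) : ℝ)

lemma ff_pos (τ : ℝ) : 0 < ff τ := by unfold ff; positivity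

lemma ff_cont : Continuous ff := by
  apply Continuous.rpow_const (by continuity)
  intro x; left; positivity

lemma ff_int : Integrable ff := by
  refine integrable_inv_one_add_sq.mono' ff_cont.aestronglyMeasurable ?_
  filter_upwards with x
  rw [Real.norm_of_nonneg (ff_pos x).le]
  have h1 : (1:ℝ) ≤ 1 + x^2 := by nlinarith [sq_nonneg x]
  have := Real.rpow_le_rpow_of_exponent_le h1 (by norm_num : (-(5/4):ℝ) ≤ -1)
  calc ff x ≤ (1 + x^2) ^ (-1:ℝ) := this
    _ = (1 + x^2)⁻¹ := by rw [Real.rpow_neg_one]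

lemma G_eq (t : ℝ) : G t = ∫ τ in (0:ℝ)..t, ff τ := rfl

lemma G_strictMono : StrictMono G := by
  intro a b hab
  have h1 : G b - G a = ∫ τ in a..b, ff τ := by
    rw [G_eq, G_eq, ← intervalIntegral.integral_add_adjacent_intervals
      (ff_int.intervalIntegrable (a:=0) (b:=a)) (ff_int.intervalIntegrable (a:=a) (b:=b))]
    ring
  have h2 : 0 < ∫ τ in a..b, ff τ :=
    intervalIntegral.intervalIntegral_pos_of_pos (ff_int.intervalIntegrable (a:=a) (b:=b)) ff_pos hab
  linarith

lemma G_hasDeriv (t : ℝ) : HasDerivAt G (ff t) t :=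
  intervalIntegral.integral_hasDerivAt_right (ff_int.intervalIntegrable (a:=0) (b:=t))
    ff_cont.aestronglyMeasurable.stronglyMeasurableAtFilter ff_cont.continuousAt

lemma G_cont : Continuous G :=
  continuous_iff_continuousAt.2 fun t => (G_hasDeriv t).continuousAt

lemma G_zero : G 0 = 0 := intervalIntegral.integral_same

lemma G_odd (t : ℝ) : G (-t) = - G t := by
  have h : (∫ τ in (0:ℝ)..t, ff (-τ)) = ∫ τ in (-t)..(0:ℝ), ff τ := by
    simpa using intervalIntegral.integral_comp_neg (a := (0:ℝ)) (b := t) ff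
  have he : (∫ τ in (0:ℝ)..t, ff (-τ)) = G t := by
    rw [G_eq]; congr 1; ext τ; unfold ff; rw [neg_pow]; ring_nf
  rw [G_eq, intervalIntegral.integral_symm]
  rw [he] at h; rw [← h]

lemma G_abs (s : ℝ) : G |s| = |G s| := by
  rcases le_or_gt 0 s with h | h
  · rw [abs_of_nonneg h, abs_of_nonneg]
    rw [← G_zero]
    exact G_strictMono.monotone h
  · rw [abs_of_neg h, G_odd, abs_of_nonpos (by rw [← G_zero]; exact G_strictMono.monotone h.le)]

lemma c0_eq : c0 = 2 * ∫ τ in Set.Ioi (0:ℝ), ff τ := by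
  have : c0 = ∫ τ : ℝ, ff |τ| := by
    unfold c0; congr 1; ext τ; unfold ff; rw [sq_abs]
  rw [this, integral_comp_abs]

lemma G_tendsto : Filter.Tendsto G Filter.atTop (nhds (c0 / 2)) := by
  have h := MeasureTheory.intervalIntegral_tendsto_integral_Ioi 0
    ff_int.integrableOn Filter.tendsto_id (f := ff) (μ := volume)
  rw [c0_eq]; ring_nf
  exact h

lemma cs_interval {g : ℝ → ℝ} {a b : ℝ} (hab : a ≤ b)
    (hg : AEStronglyMeasurable g (volume.restrict (Set.Ioc a b)))
    (hg2 : IntegrableOn (fun s => g s ^ 2) (Set.Ioc a b)) :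
    (∫ s in a..b, g s) ^ 2 ≤ (b - a) * ∫ s in a..b, g s ^ 2 := by
  set μ := volume.restrict (Set.Ioc a b) with hμ
  haveI : IsFiniteMeasure μ := by
    constructor
    rw [hμ, Measure.restrict_apply_univ, Real.volume_Ioc]
    exact ENNReal.ofReal_lt_top
  have hpq : Real.HolderConjugate 2 2 := by
    constructor <;> norm_num
  have hmem : MemLp g 2 μ := (memLp_two_iff_integrable_sq hg).2 hg2
  have hmem1 : MemLp (fun _ : ℝ => (1:ℝ)) 2 μ := memLp_const 1
  have key := integral_mul_norm_le_Lp_mul_Lq (μ := μ) (f := g) (g := fun _ => (1:ℝ))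
    (by simpa using hpq) (by simpa using hmem) (by simpa using hmem1)
  simp only [norm_one, mul_one] at key
  have h2 : ∀ x : ℝ, ‖g x‖ ^ (2:ℝ) = g x ^ 2 := fun x => by
    rw [show (2:ℝ) = ((2:ℕ):ℝ) by norm_num, Real.rpow_natCast]
    simp [Real.norm_eq_abs, sq_abs]
  have hone : ∫ _ : ℝ, (1:ℝ)^(2:ℝ) ∂μ = b - a := by
    simp [hμ, Real.volume_Ioc, ENNReal.toReal_ofReal (sub_nonneg.2 hab), hab]
  simp only [h2, Real.rpow_natCast] at key
  rw [hone] at key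
  have hI : ∫ s in a..b, g s = ∫ x, g x ∂μ := by
    rw [intervalIntegral.integral_of_le hab]
  have hI2 : ∫ s in a..b, g s ^ 2 = ∫ x, g x ^ 2 ∂μ := by
    rw [intervalIntegral.integral_of_le hab]
  have habs : |∫ x, g x ∂μ| ≤ ∫ x, ‖g x‖ ∂μ := by
    simpa using norm_integral_le_integral_norm (μ := μ) g
  have hsq_nonneg : 0 ≤ ∫ x, g x ^ 2 ∂μ := integral_nonneg fun x => sq_nonneg _
  have hba : (0:ℝ) ≤ b - a := sub_nonneg.2 hab
  have hkey2 : (∫ x, ‖g x‖ ∂μ) ^ 2 ≤ (∫ x, g x ^ 2 ∂μ) * (b - a) := by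
    have hr : ((∫ x, g x ^ 2 ∂μ) ^ (1/(2:ℝ)) * (b - a) ^ (1/(2:ℝ))) ^ 2
        = (∫ x, g x ^ 2 ∂μ) * (b - a) := by
      rw [mul_pow, ← Real.rpow_natCast (_ ^ (1/(2:ℝ))) 2, ← Real.rpow_natCast (_ ^ (1/(2:ℝ))) 2,
        ← Real.rpow_mul hsq_nonneg, ← Real.rpow_mul hba]
      norm_num
    calc (∫ x, ‖g x‖ ∂μ) ^ 2
        ≤ ((∫ x, g x ^ 2 ∂μ) ^ (1/(2:ℝ)) * (b - a) ^ (1/(2:ℝ))) ^ 2 := by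
          apply pow_le_pow_left₀ (integral_nonneg fun x => norm_nonneg _) key
      _ = _ := hr
  rw [hI, hI2]
  calc (∫ x, g x ∂μ) ^ 2 = |∫ x, g x ∂μ| ^ 2 := (sq_abs _).symm
    _ ≤ (∫ x, ‖g x‖ ∂μ) ^ 2 := pow_le_pow_left₀ (abs_nonneg _) habs 2
    _ ≤ (∫ x, g x ^ 2 ∂μ) * (b - a) := hkey2
    _ = (b - a) * ∫ x, g x ^ 2 ∂μ := mul_comm _ _

/-- Lemma 2.17: gradient bound for `v ∈ H²₀(0,1)` with `W(v) ≤ c₂²`. -/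
theorem gradient_bound_nonsymmetric (v v' v'' : ℝ → ℝ) (c₂ : ℝ)
    (hv : ∀ x, HasDerivAt v (v' x) x)
    (hv' : ∀ x, HasDerivAt v' (v'' x) x)
    (hv'c : Continuous v')
    (hv0 : v 0 = 0) (hv1 : v 1 = 0) (hv'0 : v' 0 = 0) (hv'1 : v' 1 = 0)
    (hWint : IntervalIntegrable (fun x => v'' x ^ 2 * (1 + v' x ^ 2) ^ (-(5/2) : ℝ)) volume 0 1)
    (hc₂ : c₂ ∈ Set.Ioo (0:ℝ) c0)
    (hW : (∫ x in (0:ℝ)..1, v'' x ^ 2 * (1 + v' x ^ 2) ^ (-(5/2) : ℝ)) ≤ c₂ ^ 2) :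
    ∀ x ∈ Set.Icc (0:ℝ) 1, |v' x| ≤ Ginv (c₂ / 2) := by
  obtain ⟨hc₂0, hc₂c0⟩ := hc₂
  -- `Ginv (c₂/2)` is a genuine preimage
  have hsurj : ∃ t, G t = c₂ / 2 := by
    have hlt : c₂ / 2 < c0 / 2 := by linarith
    obtain ⟨T, hT⟩ := (G_tendsto.eventually (eventually_gt_nhds hlt)).exists
    have h0T : (0:ℝ) ≤ T := by
      by_contra hcon
      push_neg at hcon
      have := G_strictMono hcon
      rw [G_zero] at this
      linarith
    have := intermediate_value_Icc h0T G_cont.continuousOn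
      (by rw [G_zero]; constructor <;> [linarith; linarith] :
        c₂ / 2 ∈ Set.Icc (G 0) (G T))
    obtain ⟨t, _, ht⟩ := this
    exact ⟨t, ht⟩
  have hGinv : G (Ginv (c₂ / 2)) = c₂ / 2 := Function.invFun_eq hsurj
  -- the integrand and its square root
  set h : ℝ → ℝ := fun x => v'' x ^ 2 * (1 + v' x ^ 2) ^ (-(5/2) : ℝ) with hh
  set g : ℝ → ℝ := fun s => ff (v' s) * v'' s with hg
  have hh_nonneg : ∀ s, 0 ≤ h s := fun s => by
    simp only [hh]; positivity
  have hgsq : ∀ s, g s ^ 2 = h s := by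
    intro s
    have hff2 : ff (v' s) ^ 2 = (1 + v' s ^ 2) ^ (-(5/2):ℝ) := by
      simp only [ff]
      rw [sq, ← Real.rpow_add (by positivity : (0:ℝ) < 1 + v' s ^ 2)]
      norm_num
    simp only [hg, hh, mul_pow, hff2]
    ring
  have hgfun : (fun s => g s ^ 2) = h := funext hgsq
  -- measurability of g
  have hv''m : Measurable v'' := by
    have : v'' = deriv v' := funext fun x => ((hv' x).deriv).symm
    rw [this]; exact measurable_deriv _
  have hgm : Measurable g := (ff_cont.comp hv'c).measurable.mul hv''m
  -- integrability
  have hH : IntegrableOn h (Set.Ioc 0 1) :=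
    (intervalIntegrable_iff_integrableOn_Ioc_of_le (by norm_num)).1 hWint
  have hg_on : IntegrableOn g (Set.Ioc 0 1) := by
    haveI : IsFiniteMeasure (volume.restrict (Set.Ioc (0:ℝ) 1)) := by
      constructor
      rw [Measure.restrict_apply_univ, Real.volume_Ioc]
      exact ENNReal.ofReal_lt_top
    refine Integrable.mono' ((integrable_const 1).add hH) hgm.aestronglyMeasurable ?_
    filter_upwards with s
    simp only [Pi.add_apply]
    have h1 : |g s| = Real.sqrt (h s) := by
      rw [← hgsq s, Real.sqrt_sq_eq_abs]
    rw [Real.norm_eq_abs, h1]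
    have := hh_nonneg s
    nlinarith [Real.sq_sqrt this, Real.sqrt_nonneg (h s)]
  have hgI : IntervalIntegrable g volume 0 1 :=
    (intervalIntegrable_iff_integrableOn_Ioc_of_le (by norm_num)).2 hg_on
  -- main estimate
  intro x hx
  obtain ⟨hx0, hx1⟩ := hx
  have hsub1 : Set.uIcc (0:ℝ) x ⊆ Set.uIcc (0:ℝ) 1 := by
    rw [Set.uIcc_of_le hx0, Set.uIcc_of_le (by norm_num : (0:ℝ) ≤ 1)]
    exact Set.Icc_subset_Icc le_rfl hx1
  have hsub2 : Set.uIcc x 1 ⊆ Set.uIcc (0:ℝ) 1 := by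
    rw [Set.uIcc_of_le hx1, Set.uIcc_of_le (by norm_num : (0:ℝ) ≤ 1)]
    exact Set.Icc_subset_Icc hx0 le_rfl
  have hsubIoc1 : Set.Ioc (0:ℝ) x ⊆ Set.Ioc (0:ℝ) 1 := Set.Ioc_subset_Ioc le_rfl hx1
  have hsubIoc2 : Set.Ioc x 1 ⊆ Set.Ioc (0:ℝ) 1 := Set.Ioc_subset_Ioc hx0 le_rfl
  -- FTC
  have hF : ∀ s, HasDerivAt (fun y => G (v' y)) (g s) s := fun s =>
    (G_hasDeriv (v' s)).comp s (hv' s)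
  have hE1 : (∫ s in (0:ℝ)..x, g s) = G (v' x) := by
    have := intervalIntegral.integral_eq_sub_of_hasDerivAt
      (f := fun y => G (v' y)) (f' := g) (fun s _ => hF s) (hgI.mono_set hsub1)
    rw [this]; simp [hv'0, G_zero]
  have hE2 : (∫ s in x..(1:ℝ), g s) = - G (v' x) := by
    have := intervalIntegral.integral_eq_sub_of_hasDerivAt
      (f := fun y => G (v' y)) (f' := g) (fun s _ => hF s) (hgI.mono_set hsub2)
    rw [this]; simp [hv'1, G_zero]
  -- Cauchy-Schwarz on both pieces
  set A : ℝ := ∫ s in (0:ℝ)..x, h s with hA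
  set B : ℝ := ∫ s in x..(1:ℝ), h s with hB
  have hAnn : 0 ≤ A := intervalIntegral.integral_nonneg hx0 fun s _ => hh_nonneg s
  have hBnn : 0 ≤ B := intervalIntegral.integral_nonneg hx1 fun s _ => hh_nonneg s
  have hABsum : A + B ≤ c₂ ^ 2 := by
    have := intervalIntegral.integral_add_adjacent_intervals
      (a := (0:ℝ)) (b := x) (c := (1:ℝ))
      (hWint.mono_set hsub1) (hWint.mono_set hsub2)
    rw [hA, hB, hh]
    calc (∫ s in (0:ℝ)..x, v'' s ^ 2 * (1 + v' s ^ 2) ^ (-(5/2) : ℝ))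
        + ∫ s in x..(1:ℝ), v'' s ^ 2 * (1 + v' s ^ 2) ^ (-(5/2) : ℝ)
        = ∫ s in (0:ℝ)..(1:ℝ), v'' s ^ 2 * (1 + v' s ^ 2) ^ (-(5/2) : ℝ) := this
      _ ≤ c₂ ^ 2 := hW
  have hCS1 : G (v' x) ^ 2 ≤ x * A := by
    have := cs_interval hx0 (hgm.aestronglyMeasurable (μ := volume.restrict (Set.Ioc 0 x)))
      (by rw [hgfun]; exact hH.mono_set hsubIoc1)
    rw [hE1] at this
    calc G (v' x) ^ 2 ≤ (x - 0) * ∫ s in (0:ℝ)..x, g s ^ 2 := this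
      _ = x * A := by rw [sub_zero, hA]; congr 1; simp only [hgsq]
  have hCS2 : G (v' x) ^ 2 ≤ (1 - x) * B := by
    have := cs_interval hx1 (hgm.aestronglyMeasurable (μ := volume.restrict (Set.Ioc x 1)))
      (by rw [hgfun]; exact hH.mono_set hsubIoc2)
    rw [hE2] at this
    calc G (v' x) ^ 2 = (- G (v' x)) ^ 2 := by ring
      _ ≤ (1 - x) * ∫ s in x..(1:ℝ), g s ^ 2 := this
      _ = (1 - x) * B := by rw [hB]; congr 1; simp only [hgsq]
  -- numeric combination: 2 |G (v' x)| ≤ c₂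
  set y : ℝ := |G (v' x)| with hy
  have hynn : 0 ≤ y := abs_nonneg _
  have hysq : y ^ 2 = G (v' x) ^ 2 := sq_abs _
  have hs1 : y ≤ Real.sqrt x * Real.sqrt A := by
    rw [← Real.sqrt_mul hx0]
    rw [show y = Real.sqrt (y^2) by rw [Real.sqrt_sq hynn]]
    exact Real.sqrt_le_sqrt (by rw [hysq]; exact hCS1)
  have hs2 : y ≤ Real.sqrt (1 - x) * Real.sqrt B := by
    rw [← Real.sqrt_mul (by linarith : (0:ℝ) ≤ 1 - x)]
    rw [show y = Real.sqrt (y^2) by rw [Real.sqrt_sq hynn]]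
    exact Real.sqrt_le_sqrt (by rw [hysq]; exact hCS2)
  have hfin : 2 * y ≤ c₂ := by
    set sx := Real.sqrt x
    set sx' := Real.sqrt (1 - x)
    set sA := Real.sqrt A
    set sB := Real.sqrt B
    have h1 : (sx * sA + sx' * sB) ^ 2 ≤ c₂ ^ 2 := by
      nlinarith [sq_nonneg (sx * sB - sx' * sA), Real.sq_sqrt hx0,
        Real.sq_sqrt (by linarith : (0:ℝ) ≤ 1 - x), Real.sq_sqrt hAnn, Real.sq_sqrt hBnn,
        Real.sqrt_nonneg x, Real.sqrt_nonneg (1-x), Real.sqrt_nonneg A, Real.sqrt_nonneg B]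
    have h2 : 0 ≤ sx * sA + sx' * sB := by positivity
    nlinarith
  -- conclude
  have hGle : G |v' x| ≤ G (Ginv (c₂ / 2)) := by
    rw [G_abs, hGinv]
    calc |G (v' x)| = y := rfl
      _ ≤ c₂ / 2 := by linarith
  exact (G_strictMono.le_iff_le).1 hGle
end

section
/- If u ∈ C⁴([0,1]) is symmetric around x = 1/2, solves the elastica equation (1+u'²)^(-1/2)·(κ'/(1+u'²)^(1/2))' + κ³/2 = 0 on (0,1), and satisfies full Dirichlet conditions u(0)=u(1)=0 and u'(0)=u'(1)=0, then u ≡ 0. -/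
private lemma elastica_key (v : ℝ → ℝ) (hv : ContDiff ℝ 3 v)
    (hE : ∀ x ∈ Set.Ioo (0:ℝ) 1,
        (1 + v x ^ 2) ^ (-(1/2) : ℝ)
            * deriv (fun y =>
                deriv (fun z => deriv v z * (1 + v z ^ 2) ^ (-(3/2) : ℝ)) y
                  * (1 + v y ^ 2) ^ (-(1/2) : ℝ)) x
          + (deriv v x * (1 + v x ^ 2) ^ (-(3/2) : ℝ)) ^ 3 / 2 = 0)
    (hsymv : ∀ x, v x = - v (1 - x))
    (hv0 : v 0 = 0) (hv1 : v 1 = 0) :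
    ∀ x ∈ Set.Icc (0:ℝ) 1, v x = 0 := by
  have hvd : Differentiable ℝ v := hv.differentiable (by norm_num)
  have hwC : ContDiff ℝ 2 (deriv v) :=
    (contDiff_succ_iff_deriv.mp (show ContDiff ℝ (2+1) v by norm_num; exact hv)).2.2
  have hwd : Differentiable ℝ (deriv v) := hwC.differentiable (by norm_num)
  have hP : ∀ y : ℝ, (0:ℝ) < 1 + v y ^ 2 := fun y => by positivity
  have hvD : ∀ x, HasDerivAt v (deriv v x) x := fun x => (hvd x).hasDerivAt
  -- rpow smoothness helper
  have hrp : ∀ r : ℝ, ContDiff ℝ 3 (fun y => (1 + v y ^ 2) ^ r) := by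
    intro r
    rw [contDiff_iff_contDiffAt]
    intro x
    exact (Real.contDiffAt_rpow_const_of_ne (hP x).ne').comp x
      (contDiff_const.add (hv.pow 2)).contDiffAt
  -- curvature
  set κ : ℝ → ℝ := fun z => deriv v z * (1 + v z ^ 2) ^ (-(3/2) : ℝ) with hκdef
  have hκC : ContDiff ℝ 2 κ := hwC.mul ((hrp _).of_le (by norm_num))
  have hκ'C : ContDiff ℝ 1 (deriv κ) :=
    (contDiff_succ_iff_deriv.mp (show ContDiff ℝ (1+1) κ by norm_num; exact hκC)).2.2
  have hκd : Differentiable ℝ κ := hκC.differentiable (by norm_num)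
  have hκD : ∀ x, HasDerivAt κ (deriv κ x) x := fun x => (hκd x).hasDerivAt
  set q : ℝ → ℝ := fun y => deriv κ y * (1 + v y ^ 2) ^ (-(1/2) : ℝ) with hqdef
  have hqC : ContDiff ℝ 1 q := hκ'C.mul ((hrp _).of_le (by norm_num))
  have hqD : ∀ x, HasDerivAt q (deriv q x) x :=
    fun x => (hqC.differentiable (by norm_num) x).hasDerivAt
  -- derivative of powers of p
  have hpD : ∀ x, HasDerivAt (fun y => 1 + v y ^ 2) (2 * v x * deriv v x) x := fun x => by
    simpa [mul_comm, mul_assoc] using ((hvD x).pow 2).const_add 1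
  have hPa : ∀ x, HasDerivAt (fun y => (1 + v y ^ 2) ^ (-(1/2):ℝ))
      (-(v x * deriv v x) * (1 + v x ^ 2) ^ (-(3/2):ℝ)) x := by
    intro x
    have := (hpD x).rpow_const (p := (-(1/2):ℝ)) (Or.inl (hP x).ne')
    convert this using 1
    rw [show (-(1/2):ℝ) - 1 = -(3/2) by norm_num]; ring
  have hPc : ∀ x, HasDerivAt (fun y => (1 + v y ^ 2) ^ ((1/2):ℝ))
      ((v x * deriv v x) * (1 + v x ^ 2) ^ (-(1/2):ℝ)) x := by
    intro x
    have := (hpD x).rpow_const (p := ((1/2):ℝ)) (Or.inl (hP x).ne')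
    convert this using 1
    rw [show ((1/2):ℝ) - 1 = -(1/2) by norm_num]; ring
  -- rpow identities
  have hac : ∀ x, (1 + v x ^ 2) ^ (-(1/2):ℝ) * (1 + v x ^ 2) ^ ((1/2):ℝ) = 1 := by
    intro x; rw [← Real.rpow_add (hP x)]; norm_num
  have hPab : ∀ x, (1 + v x ^ 2) * (1 + v x ^ 2) ^ (-(3/2):ℝ) = (1 + v x ^ 2) ^ (-(1/2):ℝ) := by
    intro x
    rw [show ((1 + v x ^ 2) ^ (-(1/2):ℝ)) = (1 + v x ^ 2) ^ (1 + (-(3/2)) : ℝ) by norm_num,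
      Real.rpow_add (hP x), Real.rpow_one]
  have hcc : ∀ x, (1 + v x ^ 2) ^ ((1/2):ℝ) * (1 + v x ^ 2) ^ ((1/2):ℝ) = 1 + v x ^ 2 := by
    intro x; rw [← Real.rpow_add (hP x)]; norm_num
  -- symmetry of deriv v
  have hsymw : ∀ x, deriv v x = deriv v (1 - x) := by
    intro x
    have h1 : HasDerivAt (fun y => -v (1 - y)) (deriv v (1 - x)) x := by
      have h0 : HasDerivAt (fun y : ℝ => 1 - y) (-1) x := by
        simpa using (hasDerivAt_id x).const_sub 1
      have := ((hvD (1 - x)).comp x h0).neg; rw [mul_neg_one, neg_neg] at this; exact this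
    have h2 := hvD x
    calc deriv v x = deriv (fun y => -v (1 - y)) x := by
          conv_lhs => rw [show v = fun y => -v (1 - y) from funext hsymv]
      _ = deriv v (1 - x) := by
          rw [show v = fun y => -v (1 - y) from funext hsymv] at h2
          exact h2.unique h1
  have hsymκ : ∀ x, κ x = κ (1 - x) := by
    intro x
    rw [hκdef]
    simp only
    rw [hsymw x, show v x = -v (1 - x) from hsymv x, neg_sq]
  have hsymκ' : ∀ x, deriv κ x = - deriv κ (1 - x) := by
    intro x
    have h1 : HasDerivAt (fun y => κ (1 - y)) (- deriv κ (1 - x)) x := by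
      have h0 : HasDerivAt (fun y : ℝ => 1 - y) (-1) x := by
        simpa using (hasDerivAt_id x).const_sub 1
      have := (hκD (1 - x)).comp x h0; rw [mul_neg_one] at this; exact this
    have h2 := hκD x
    calc deriv κ x = deriv (fun y => κ (1 - y)) x := by
          conv_lhs => rw [show κ = fun y => κ (1 - y) from funext hsymκ]
      _ = - deriv κ (1 - x) := by
          rw [show κ = fun y => κ (1 - y) from funext hsymκ] at h2
          exact h2.unique h1
  -- the conserved quantity A
  set A : ℝ → ℝ := fun y => (q y + κ y ^ 2 / 2 * v y) * (1 + v y ^ 2) ^ (-(1/2):ℝ) with hAdef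
  have hAC : ContDiff ℝ 1 A :=
    (hqC.add (((hκC.of_le (by norm_num)).pow 2).div_const 2 |>.mul (hv.of_le (by norm_num)))).mul
      ((hrp _).of_le (by norm_num))
  have hAderiv : ∀ x ∈ Set.Ioo (0:ℝ) 1, HasDerivAt A 0 x := by
    intro x hx
    -- value of deriv q from the elastica equation
    have hq' : deriv q x = -(κ x ^ 3 / 2) * (1 + v x ^ 2) ^ ((1/2):ℝ) := by
      have h1 := hE x hx
      have h2 : (1 + v x ^ 2) ^ (-(1/2):ℝ) * deriv q x = -(κ x ^ 3 / 2) := by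
        rw [hκdef]; simp only; linarith [h1]
      calc deriv q x
            = ((1 + v x ^ 2) ^ (-(1/2):ℝ) * (1 + v x ^ 2) ^ ((1/2):ℝ)) * deriv q x := by
              rw [hac x, one_mul]
        _ = ((1 + v x ^ 2) ^ (-(1/2):ℝ) * deriv q x) * (1 + v x ^ 2) ^ ((1/2):ℝ) := by ring
        _ = -(κ x ^ 3 / 2) * (1 + v x ^ 2) ^ ((1/2):ℝ) := by rw [h2]
    have hB : HasDerivAt (fun y => q y + κ y ^ 2 / 2 * v y)
        (deriv q x + ((2 * κ x ^ 1 * deriv κ x) / 2 * v x + κ x ^ 2 / 2 * deriv v x)) x :=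
      (hqD x).add ((((hκD x).pow 2).div_const 2).mul (hvD x))
    have hA1 := hB.mul (hPa x)
    rw [show (0:ℝ) = (deriv q x + ((2 * κ x ^ 1 * deriv κ x) / 2 * v x + κ x ^ 2 / 2 * deriv v x)) *
        (1 + v x ^ 2) ^ (-(1/2):ℝ) +
        (q x + κ x ^ 2 / 2 * v x) * (-(v x * deriv v x) * (1 + v x ^ 2) ^ (-(3/2):ℝ)) from ?_]
    · exact hA1
    · rw [hq', hqdef, hκdef]
      simp only
      linear_combination
        ((deriv v x)^3 * ((1 + v x ^ 2) ^ (-(3/2):ℝ))^3 / 2) * hac x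
        + ((deriv v x)^3 * ((1 + v x ^ 2) ^ (-(3/2):ℝ))^2 / 2) * hPab x
  -- A is constant on [0,1]
  have hA'zero : Set.EqOn (deriv A) 0 (Set.Icc (0:ℝ) 1) := by
    have h1 : Set.EqOn (deriv A) 0 (Set.Ioo (0:ℝ) 1) := fun x hx => (hAderiv x hx).deriv
    have h2 := h1.closure
      ((contDiff_succ_iff_deriv.mp
        (show ContDiff ℝ (0+1) A by norm_num; exact hAC)).2.2.continuous)
      continuous_const
    rwa [closure_Ioo (by norm_num : (0:ℝ) ≠ 1)] at h2
  have hAconst : ∀ x ∈ Set.Icc (0:ℝ) 1, A x = A 0 := by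
    apply constant_of_has_deriv_right_zero hAC.continuous.continuousOn
    intro x hx
    have h1 : HasDerivAt A (deriv A x) x := (hAC.differentiable (by norm_num) x).hasDerivAt
    rw [hA'zero (Set.Ico_subset_Icc_self hx)] at h1
    exact h1.hasDerivWithinAt
  -- endpoint values of A
  have hA0 : A 0 = deriv κ 0 := by
    rw [hAdef]; simp only
    rw [hqdef]; simp only
    rw [hv0]
    norm_num
  have hA1 : A 1 = deriv κ 1 := by
    rw [hAdef]; simp only
    rw [hqdef]; simp only
    rw [hv1]
    norm_num
  have hκ'0 : deriv κ 0 = 0 := by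
    have h1 := hAconst 1 (by norm_num)
    have h2 := hsymκ' 1
    norm_num at h2
    rw [hA1, hA0, h2] at h1
    linarith
  have hAzero : ∀ x ∈ Set.Icc (0:ℝ) 1, A x = 0 := by
    intro x hx
    rw [hAconst x hx, hA0, hκ'0]
  -- the quantity g = κ² √(1+v²) is constant
  set g : ℝ → ℝ := fun y => κ y ^ 2 * (1 + v y ^ 2) ^ ((1/2):ℝ) with hgdef
  have hgderiv : ∀ x ∈ Set.Icc (0:ℝ) 1, HasDerivAt g 0 x := by
    intro x hx
    -- from A x = 0, solve for deriv κ x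
    have ha_ne : (1 + v x ^ 2) ^ (-(1/2):ℝ) ≠ 0 := (Real.rpow_pos_of_pos (hP x) _).ne'
    have h1 : q x + κ x ^ 2 / 2 * v x = 0 := by
      have := hAzero x hx
      rw [hAdef] at this; simp only at this
      rcases mul_eq_zero.mp this with h | h
      · exact h
      · exact absurd h ha_ne
    have hK : deriv κ x * (1 + v x ^ 2) ^ (-(1/2):ℝ) = -(κ x ^ 2 / 2 * v x) := by
      rw [hqdef] at h1; simp only at h1; linarith
    have hK' : deriv κ x = -(κ x ^ 2 / 2 * v x) * (1 + v x ^ 2) ^ ((1/2):ℝ) := by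
      calc deriv κ x
            = (deriv κ x * (1 + v x ^ 2) ^ (-(1/2):ℝ)) * (1 + v x ^ 2) ^ ((1/2):ℝ) := by
              rw [mul_assoc, hac x, mul_one]
        _ = -(κ x ^ 2 / 2 * v x) * (1 + v x ^ 2) ^ ((1/2):ℝ) := by rw [hK]
    have hg1 := ((hκD x).pow 2).mul (hPc x)
    rw [show (0:ℝ) = (2 * κ x ^ 1 * deriv κ x) * (1 + v x ^ 2) ^ ((1/2):ℝ) +
        κ x ^ 2 * ((v x * deriv v x) * (1 + v x ^ 2) ^ (-(1/2):ℝ)) from ?_]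
    · exact hg1
    · rw [hK', hκdef]
      simp only
      linear_combination
        ((deriv v x)^3 * v x * ((1 + v x ^ 2) ^ (-(3/2):ℝ))^3) * hcc x
        + ((deriv v x)^3 * v x * ((1 + v x ^ 2) ^ (-(3/2):ℝ))^2) * hPab x
  have hgconst : ∀ x ∈ Set.Icc (0:ℝ) 1, g x = g 0 := by
    apply constant_of_has_deriv_right_zero
    · exact ((hκC.pow 2).mul ((hrp _).of_le (by norm_num))).continuous.continuousOn
    · exact fun x hx => (hgderiv x (Set.Ico_subset_Icc_self hx)).hasDerivWithinAt
  have hg0 : g 0 = (deriv v 0) ^ 2 := by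
    rw [hgdef]; simp only
    rw [hκdef]; simp only
    rw [hv0]
    norm_num
  -- case analysis on w 0 = deriv v 0
  rcases eq_or_ne (deriv v 0) 0 with h0 | h0
  · -- deriv v ≡ 0 on [0,1], so v is constant = v 0 = 0
    have hwzero : ∀ x ∈ Set.Icc (0:ℝ) 1, deriv v x = 0 := by
      intro x hx
      have h1 := hgconst x hx
      rw [hg0, h0] at h1
      rw [hgdef] at h1; simp only at h1
      norm_num at h1
      have hκ0 : κ x = 0 := by
        rcases h1 with h | h
        · exact h
        · exact absurd h (Real.rpow_pos_of_pos (hP x) _).ne'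
      rw [hκdef] at hκ0; simp only at hκ0
      rcases mul_eq_zero.mp hκ0 with h | h
      · exact h
      · exact absurd h (Real.rpow_pos_of_pos (hP x) _).ne'
    have hvconst : ∀ x ∈ Set.Icc (0:ℝ) 1, v x = v 0 := by
      apply constant_of_has_deriv_right_zero hv.continuous.continuousOn
      intro x hx
      have h1 := hvD x
      rw [hwzero x (Set.Ico_subset_Icc_self hx)] at h1
      exact h1.hasDerivWithinAt
    intro x hx
    rw [hvconst x hx, hv0]
  · -- deriv v never vanishes on [0,1]
    exfalso
    have hwne : ∀ x ∈ Set.Icc (0:ℝ) 1, deriv v x ≠ 0 := by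
      intro x hx hcon
      have h1 := hgconst x hx
      rw [hg0, hgdef] at h1; simp only at h1
      rw [hκdef] at h1; simp only at h1
      rw [hcon] at h1
      norm_num at h1
      exact h0 (pow_eq_zero_iff (by norm_num)|>.mp h1.symm)
    have hwcont : ContinuousOn (deriv v) (Set.Icc (0:ℝ) 1) := hwC.continuous.continuousOn
    rcases h0.lt_or_gt with hneg | hpos
    · -- deriv v 0 < 0 : v strictly decreasing, contradiction with v 0 = v 1 = 0
      have hall : ∀ x ∈ Set.Icc (0:ℝ) 1, deriv v x < 0 := by
        intro x hx
        by_contra hcon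
        push_neg at hcon
        have hlt : 0 < deriv v x := lt_of_le_of_ne hcon (Ne.symm (hwne x hx))
        have hsub : Set.Icc (deriv v 0) (deriv v x) ⊆ deriv v '' Set.Icc 0 x :=
          intermediate_value_Icc hx.1 (hwcont.mono (Set.Icc_subset_Icc_right hx.2))
        obtain ⟨z, hz, hz0⟩ := hsub ⟨hneg.le, hlt.le⟩
        exact hwne z (Set.Icc_subset_Icc_right hx.2 hz) hz0
      have hanti : StrictAntiOn v (Set.Icc (0:ℝ) 1) :=
        strictAntiOn_of_deriv_neg (convex_Icc 0 1) hv.continuous.continuousOn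
          (by rw [interior_Icc]; exact fun x hx => hall x (Set.Ioo_subset_Icc_self hx))
      have := hanti (Set.left_mem_Icc.mpr (by norm_num)) (Set.right_mem_Icc.mpr (by norm_num))
        (by norm_num)
      rw [hv0, hv1] at this
      exact lt_irrefl 0 this
    · have hall : ∀ x ∈ Set.Icc (0:ℝ) 1, 0 < deriv v x := by
        intro x hx
        by_contra hcon
        push_neg at hcon
        have hlt : deriv v x < 0 := lt_of_le_of_ne hcon (hwne x hx)
        have hsub : Set.Icc (deriv v x) (deriv v 0) ⊆ deriv v '' Set.Icc 0 x :=
          intermediate_value_Icc' hx.1 (hwcont.mono (Set.Icc_subset_Icc_right hx.2))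
        obtain ⟨z, hz, hz0⟩ := hsub ⟨hlt.le, hpos.le⟩
        exact hwne z (Set.Icc_subset_Icc_right hx.2 hz) hz0
      have hmono : StrictMonoOn v (Set.Icc (0:ℝ) 1) :=
        strictMonoOn_of_deriv_pos (convex_Icc 0 1) hv.continuous.continuousOn
          (by rw [interior_Icc]; exact fun x hx => hall x (Set.Ioo_subset_Icc_self hx))
      have := hmono (Set.left_mem_Icc.mpr (by norm_num)) (Set.right_mem_Icc.mpr (by norm_num))
        (by norm_num)
      rw [hv0, hv1] at this
      exact lt_irrefl 0 this

open MeasureTheory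

/-- A symmetric `C⁴` graph solution of the elastica equation with full homogeneous
Dirichlet boundary conditions vanishes identically on `[0,1]`. -/
theorem symmetric_dirichlet_solution_trivial (u : ℝ → ℝ)
    (hu : ContDiff ℝ 4 u)
    (hsym : ∀ x, u x = u (1 - x))
    (helastica : ∀ x ∈ Set.Ioo (0:ℝ) 1,
        (1 + deriv u x ^ 2) ^ (-(1/2) : ℝ)
            * deriv (fun y =>
                deriv (fun z => deriv (deriv u) z * (1 + deriv u z ^ 2) ^ (-(3/2) : ℝ)) y
                  * (1 + deriv u y ^ 2) ^ (-(1/2) : ℝ)) x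
          + (deriv (deriv u) x * (1 + deriv u x ^ 2) ^ (-(3/2) : ℝ)) ^ 3 / 2 = 0)
    (hu0 : u 0 = 0) (hu1 : u 1 = 0)
    (hu'0 : deriv u 0 = 0) (hu'1 : deriv u 1 = 0) :
    ∀ x ∈ Set.Icc (0:ℝ) 1, u x = 0 := by
  have hud : Differentiable ℝ u := hu.differentiable (by norm_num)
  have hv : ContDiff ℝ 3 (deriv u) :=
    (contDiff_succ_iff_deriv.mp (show ContDiff ℝ (3+1) u by norm_num; exact hu)).2.2
  have hsymv : ∀ x, deriv u x = - deriv u (1 - x) := by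
    intro x
    have h1 : HasDerivAt (fun y => u (1 - y)) (- deriv u (1 - x)) x := by
      have h0 : HasDerivAt (fun y : ℝ => 1 - y) (-1) x := by
        simpa using (hasDerivAt_id x).const_sub 1
      have := (hud (1 - x)).hasDerivAt.comp x h0; rw [mul_neg_one] at this; exact this
    have h2 := (hud x).hasDerivAt
    calc deriv u x = deriv (fun y => u (1 - y)) x := by
          conv_lhs => rw [show u = fun y => u (1 - y) from funext hsym]
      _ = - deriv u (1 - x) := by
          rw [show u = fun y => u (1 - y) from funext hsym] at h2
          exact h2.unique h1
  have hvzero := elastica_key (deriv u) hv helastica hsymv hu'0 hu'1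
  have huconst : ∀ x ∈ Set.Icc (0:ℝ) 1, u x = u 0 := by
    apply constant_of_has_deriv_right_zero hu.continuous.continuousOn
    intro x hx
    have h1 := (hud x).hasDerivAt
    rw [hvzero x (Set.Ico_subset_Icc_self hx)] at h1
    exact h1.hasDerivWithinAt
  intro x hx
  rw [huconst x hx, hu0]
end

section
/- Let κ, k : [0, L] → ℝ be C² functions with κ(0) = k(0) < 0, κ_s(0) = k_s(0) = 0, κ_s(s) > 0 for s ∈ (0, L], κ satisfying κ'' + κ³/2 > 0 on (0,L], and k satisfying k'' + k³/2 = 0. Then κ(s) > k(s) for all s ∈ (0, L]. -/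
/-- Lemma 2.14 (curvature comparison): if `κ` is a strict supersolution and `k` a solution of
the arclength elastica ODE with the same initial data `κ(0)=k(0)<0`, `κ'(0)=k'(0)=0`, and
`κ' > 0` on `(0,L]`, then `κ > k` on `(0,L]`. -/
theorem curvature_comparison (κ κ' κ'' k k' k'' : ℝ → ℝ) (L : ℝ) (hL : 0 < L)
    (hκ : ∀ s, HasDerivAt κ (κ' s) s) (hκ' : ∀ s, HasDerivAt κ' (κ'' s) s)
    (hκ''c : Continuous κ'')
    (hk : ∀ s, HasDerivAt k (k' s) s) (hk' : ∀ s, HasDerivAt k' (k'' s) s)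
    (hk''c : Continuous k'')
    (h0 : κ 0 = k 0) (hneg : k 0 < 0)
    (hκ'0 : κ' 0 = 0) (hk'0 : k' 0 = 0)
    (hκ'pos : ∀ s ∈ Set.Ioc 0 L, 0 < κ' s)
    (hsuper : ∀ s ∈ Set.Ioc 0 L, 0 < κ'' s + κ s ^ 3 / 2)
    (hsol : ∀ s ∈ Set.Icc 0 L, k'' s + k s ^ 3 / 2 = 0) :
    ∀ s ∈ Set.Ioc 0 L, k s < κ s := by
  -- the difference function and its derivatives
  set w : ℝ → ℝ := fun s => κ s - k s with hw_def
  have hw : ∀ s, HasDerivAt w (κ' s - k' s) s := fun s => (hκ s).sub (hk s)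
  have hw' : ∀ s, HasDerivAt (fun s => κ' s - k' s) (κ'' s - k'' s) s :=
    fun s => (hκ' s).sub (hk' s)
  have hwcont : Continuous w := by
    rw [continuous_iff_continuousAt]; exact fun s => (hw s).continuousAt
  have hw0 : w 0 = 0 := by simp [hw_def, h0]
  -- energies
  set E : ℝ → ℝ := fun s => 4 * κ' s ^ 2 + κ s ^ 4 with hE_def
  set F : ℝ → ℝ := fun s => 4 * k' s ^ 2 + k s ^ 4 with hF_def
  have hE : ∀ s, HasDerivAt E (8 * κ' s * κ'' s + 4 * κ s ^ 3 * κ' s) s := by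
    intro s
    have h1 : HasDerivAt (fun s => κ' s ^ 2) (2 * κ' s ^ 1 * κ'' s) s := (hκ' s).pow 2
    have h2 : HasDerivAt (fun s => κ s ^ 4) (4 * κ s ^ 3 * κ' s) s := by
      simpa using (hκ s).fun_pow 4
    have := (h1.const_mul 4).fun_add h2
    exact this.congr_deriv (by ring)
  have hF : ∀ s, HasDerivAt F (8 * k' s * k'' s + 4 * k s ^ 3 * k' s) s := by
    intro s
    have h1 : HasDerivAt (fun s => k' s ^ 2) (2 * k' s ^ 1 * k'' s) s := (hk' s).pow 2
    have h2 : HasDerivAt (fun s => k s ^ 4) (4 * k s ^ 3 * k' s) s := by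
      simpa using (hk s).fun_pow 4
    have := (h1.const_mul 4).fun_add h2
    exact this.congr_deriv (by ring)
  -- F is constant on [0, L]
  have hFconst : ∀ s ∈ Set.Icc (0:ℝ) L, F s = F 0 := by
    apply constant_of_has_deriv_right_zero
    · exact fun s _ => (hF s).continuousAt.continuousWithinAt
    · intro x hx
      have hx' : x ∈ Set.Icc (0:ℝ) L := ⟨hx.1, hx.2.le⟩
      have hz := hsol x hx'
      have h0' : (8 : ℝ) * k' x * k'' x + 4 * k x ^ 3 * k' x = 0 := by
        have : k'' x = -(k x ^ 3 / 2) := by linarith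
        rw [this]; ring
      exact h0' ▸ (hF x).hasDerivWithinAt
  -- E is strictly increasing on [0, L]
  have hEmono : StrictMonoOn E (Set.Icc 0 L) := by
    apply strictMonoOn_of_deriv_pos (convex_Icc 0 L)
    · exact fun s _ => (hE s).continuousAt.continuousWithinAt
    · intro x hx
      rw [interior_Icc] at hx
      rw [(hE x).deriv]
      have h1 := hκ'pos x ⟨hx.1, hx.2.le⟩
      have h2 := hsuper x ⟨hx.1, hx.2.le⟩
      nlinarith [mul_pos h1 h2]
  -- energy gap on (0, L]
  have hgap : ∀ s ∈ Set.Ioc (0:ℝ) L, 4 * k' s ^ 2 + k s ^ 4 < 4 * κ' s ^ 2 + κ s ^ 4 := by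
    intro s hs
    have h1 : E 0 < E s := hEmono ⟨le_refl 0, hL.le⟩ ⟨hs.1.le, hs.2⟩ hs.1
    have h2 : F s = F 0 := hFconst s ⟨hs.1.le, hs.2⟩
    have h3 : E 0 = F 0 := by simp [hE_def, hF_def, hκ'0, hk'0, h0]
    have : F s < E s := by rw [h2, ← h3]; exact h1
    simpa [hE_def, hF_def] using this
  -- at any zero of w in (0, L], the derivative of w is positive
  have hcross : ∀ s ∈ Set.Ioc (0:ℝ) L, w s = 0 → 0 < κ' s - k' s := by
    intro s hs hws
    have h1 := hgap s hs
    have h2 := hκ'pos s hs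
    have h3 : κ s = k s := by
      have : κ s - k s = 0 := hws
      linarith
    rw [h3] at h1
    nlinarith
  -- where w < 0 on (0, L], w'' > 0
  have hconvex : ∀ s ∈ Set.Ioc (0:ℝ) L, w s < 0 → 0 < κ'' s - k'' s := by
    intro s hs hws
    have hlt : κ s < k s := by
      have : κ s - k s < 0 := hws
      linarith
    have h1 := hsuper s hs
    have h2 := hsol s ⟨hs.1.le, hs.2⟩
    have h3 : 0 < (k s - κ s) ^ 3 := pow_pos (by linarith) 3
    have h4 : 0 ≤ (k s - κ s) * (k s + κ s) ^ 2 :=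
      mul_nonneg (by linarith) (sq_nonneg _)
    nlinarith
  -- w is nonnegative on (0, L]
  have hnonneg : ∀ s ∈ Set.Ioc (0:ℝ) L, 0 ≤ w s := by
    by_contra hcon
    push_neg at hcon
    obtain ⟨s₁, hs₁, hws₁⟩ := hcon
    set T : Set ℝ := Set.Icc 0 s₁ ∩ {s | 0 ≤ w s} with hT_def
    have hTne : T.Nonempty := ⟨0, ⟨le_refl 0, hs₁.1.le⟩, by simp [hw0]⟩
    have hTclosed : IsClosed T :=
      isClosed_Icc.inter (isClosed_le continuous_const hwcont)
    have hTcomp : IsCompact T :=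
      isCompact_Icc.of_isClosed_subset hTclosed fun x hx => hx.1
    set s₂ : ℝ := sSup T with hs₂_def
    have hs₂T : s₂ ∈ T := hTcomp.sSup_mem hTne
    obtain ⟨⟨hs₂0, hs₂s₁⟩, hws₂⟩ := hs₂T
    have hws₂' : 0 ≤ w s₂ := hws₂
    have hs₂ne : s₂ ≠ s₁ := by
      intro h
      rw [h] at hws₂'
      linarith
    have hs₂lt : s₂ < s₁ := lt_of_le_of_ne hs₂s₁ hs₂ne
    -- w < 0 on (s₂, s₁]
    have hwneg : ∀ x ∈ Set.Ioc s₂ s₁, w x < 0 := by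
      intro x hx
      by_contra hge
      push_neg at hge
      have hxT : x ∈ T := ⟨⟨le_trans hs₂0 hx.1.le, hx.2⟩, hge⟩
      have : x ≤ s₂ := le_csSup hTcomp.bddAbove hxT
      exact absurd hx.1 (not_lt.2 this)
    -- w s₂ = 0
    have hws₂0 : w s₂ = 0 := by
      rcases eq_or_lt_of_le hs₂0 with h | h
      · rw [← h]; exact hw0
      · -- s₂ > 0 : w s₂ ≤ 0 by right continuity
        have htend : Filter.Tendsto w (nhdsWithin s₂ (Set.Ioi s₂)) (nhds (w s₂)) :=
          (hwcont.tendsto s₂).mono_left nhdsWithin_le_nhds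
        have hev : ∀ᶠ x in nhdsWithin s₂ (Set.Ioi s₂), w x ≤ 0 := by
          filter_upwards [Ioo_mem_nhdsGT_of_mem ⟨le_refl s₂, hs₂lt⟩] with x hx
          exact (hwneg x ⟨hx.1, hx.2.le⟩).le
        have hle : w s₂ ≤ 0 := le_of_tendsto htend hev
        linarith [hws₂']
    -- w' s₂ ≥ 0
    have hw's₂ : 0 ≤ κ' s₂ - k' s₂ := by
      rcases eq_or_lt_of_le hs₂0 with h | h
      · rw [← h, hκ'0, hk'0]; linarith
      · exact (hcross s₂ ⟨h, le_trans hs₂s₁ hs₁.2⟩ hws₂0).le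
    -- w' is strictly increasing on [s₂, s₁]
    have hw'mono : StrictMonoOn (fun s => κ' s - k' s) (Set.Icc s₂ s₁) := by
      apply strictMonoOn_of_deriv_pos (convex_Icc s₂ s₁)
      · exact fun s _ => (hw' s).continuousAt.continuousWithinAt
      · intro x hx
        rw [interior_Icc] at hx
        rw [(hw' x).deriv]
        have hxIoc : x ∈ Set.Ioc (0:ℝ) L :=
          ⟨lt_of_le_of_lt hs₂0 hx.1, le_trans hx.2.le hs₁.2⟩
        exact hconvex x hxIoc (hwneg x ⟨hx.1, hx.2.le⟩)
    -- hence w' > 0 on (s₂, s₁), so w is strictly increasing on [s₂, s₁]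
    have hwmono : StrictMonoOn w (Set.Icc s₂ s₁) := by
      apply strictMonoOn_of_deriv_pos (convex_Icc s₂ s₁)
      · exact fun s _ => (hw s).continuousAt.continuousWithinAt
      · intro x hx
        rw [interior_Icc] at hx
        rw [(hw x).deriv]
        have h1 : κ' s₂ - k' s₂ < κ' x - k' x :=
          hw'mono ⟨le_refl s₂, hs₂lt.le⟩ ⟨hx.1.le, hx.2.le⟩ hx.1
        linarith
    have : w s₂ < w s₁ := hwmono ⟨le_refl s₂, hs₂lt.le⟩ ⟨hs₂lt.le, le_refl s₁⟩ hs₂lt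
    rw [hws₂0] at this
    linarith
  -- strict positivity
  intro s hs
  rcases eq_or_lt_of_le (hnonneg s hs) with heq | hlt
  · -- w s = 0 : contradiction from left slope
    exfalso
    have hws : w s = 0 := heq.symm
    have hd : 0 < κ' s - k' s := hcross s hs hws
    have hdw : HasDerivWithinAt w (κ' s - k' s) (Set.Iio s) s := (hw s).hasDerivWithinAt
    have hdiff : Set.Iio s \ {s} = Set.Iio s := by
      apply Set.diff_singleton_eq_self
      simp
    have htend : Filter.Tendsto (slope w s) (nhdsWithin s (Set.Iio s))
        (nhds (κ' s - k' s)) := by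
      have := hasDerivWithinAt_iff_tendsto_slope.1 hdw
      rwa [hdiff] at this
    have hev : ∀ᶠ y in nhdsWithin s (Set.Iio s), slope w s y ≤ 0 := by
      filter_upwards [Ioo_mem_nhdsLT_of_mem ⟨hs.1, le_refl s⟩] with y hy
      have h1 : 0 ≤ w y := hnonneg y ⟨hy.1, le_trans hy.2.le hs.2⟩
      have h2 : y - s < 0 := by linarith [hy.2]
      rw [slope_def_field, div_nonpos_iff]
      left
      constructor <;> [skip; linarith]
      rw [hws]; linarith
    have : κ' s - k' s ≤ 0 := le_of_tendsto htend hev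
    linarith
  · have : 0 < κ s - k s := hlt
    linarith
end

section
/- The maximum over y ∈ [0, ∞) of the function y ↦ (2 + 2(1+y²)^(-1/4))/(c₀ − G(y)) is attained at the unique solution y₀ ∈ (0, ∞) of y₀(c₀ − G(y₀)) = 2 + 2(1+y₀²)^(-1/4), and the maximal value equals y₀. -/
open MeasureTheory

noncomputable def gg (τ : ℝ) : ℝ := (1 + τ^2) ^ (-(5/4) : ℝ)

lemma gg_pos (τ : ℝ) : 0 < gg τ :=
  Real.rpow_pos_of_pos (by positivity) _

lemma gg_cont : Continuous gg := by
  apply Continuous.rpow_const (by continuity)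
  intro x; left; positivity

lemma gg_int : Integrable gg := by
  have h := integrable_inv_one_add_sq
  refine h.mono gg_cont.aestronglyMeasurable (Filter.Eventually.of_forall fun x => ?_)
  have h1 : (1:ℝ) ≤ 1 + x^2 := by nlinarith [sq_nonneg x]
  rw [Real.norm_eq_abs, Real.norm_eq_abs, abs_of_pos (gg_pos x), abs_of_pos (by positivity : (0:ℝ) < (1 + x^2)⁻¹)]
  calc gg x ≤ (1 + x^2) ^ (-1 : ℝ) :=
        Real.rpow_le_rpow_of_exponent_le h1 (by norm_num)
    _ = (1 + x^2)⁻¹ := by rw [Real.rpow_neg_one]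

lemma hG_deriv (y : ℝ) : HasDerivAt G (gg y) y := by
  exact intervalIntegral.integral_hasDerivAt_right gg_int.intervalIntegrable
    gg_cont.aestronglyMeasurable.stronglyMeasurableAtFilter gg_cont.continuousAt

lemma key_lb (y : ℝ) : (∫ τ in Set.Iic (0:ℝ), gg τ) ≤ c0 - G y := by
  have hsplit : (∫ τ in Set.Iic (0:ℝ), gg τ) + ∫ τ in Set.Ioi (0:ℝ), gg τ = c0 :=
    intervalIntegral.integral_Iic_add_Ioi gg_int.integrableOn gg_int.integrableOn
  have hGle : G y ≤ ∫ τ in Set.Ioi (0:ℝ), gg τ := by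
    rcases le_or_gt y 0 with hy | hy
    · have h1 : G y ≤ 0 := by
        rw [show G y = -∫ τ in y..0, gg τ by rw [← intervalIntegral.integral_symm]; rfl]
        simp only [neg_nonpos]
        exact intervalIntegral.integral_nonneg hy (fun x _ => (gg_pos x).le)
      exact h1.trans (setIntegral_nonneg measurableSet_Ioi (fun x _ => (gg_pos x).le))
    · rw [show G y = ∫ τ in Set.Ioc 0 y, gg τ from
        intervalIntegral.integral_of_le hy.le]
      exact setIntegral_mono_set gg_int.integrableOn
        (Filter.Eventually.of_forall fun x => (gg_pos x).le)
        (HasSubset.Subset.eventuallyLE Set.Ioc_subset_Ioi_self)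
  linarith

lemma J_pos : 0 < ∫ τ in Set.Iic (0:ℝ), gg τ := by
  refine (setIntegral_pos_iff_support_of_nonneg_ae ?_ gg_int.integrableOn).2 ?_
  · exact Filter.Eventually.of_forall fun x => (gg_pos x).le
  · have : (Function.support gg ∩ Set.Iic 0) = Set.Iic 0 := by
      ext x; simp [Function.support, (gg_pos x).ne']
    rw [this]
    simp [Real.volume_Iic]

noncomputable def NN (y : ℝ) : ℝ := 2 + 2 * (1 + y ^ 2) ^ (-(1/4) : ℝ)

lemma hN_deriv (y : ℝ) : HasDerivAt NN (-(y * gg y)) y := by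
  have h1 : HasDerivAt (fun y : ℝ => 1 + y ^ 2) (2 * y) y := by
    simpa using ((hasDerivAt_pow 2 y).const_add 1)
  have h2 := (h1.rpow_const (p := (-(1/4) : ℝ)) (Or.inl (by positivity))).const_mul 2
  have h3 := h2.const_add 2
  refine h3.congr_deriv ?_
  rw [show (-(1/4) : ℝ) - 1 = -(5/4) by norm_num]
  unfold gg; ring

lemma one_le_base (y : ℝ) : (1:ℝ) ≤ 1 + y ^ 2 := by nlinarith [sq_nonneg y]

lemma NN_le (y : ℝ) : NN y ≤ 4 := by
  have : (1 + y ^ 2) ^ (-(1/4) : ℝ) ≤ 1 :=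
    Real.rpow_le_one_of_one_le_of_nonpos (one_le_base y) (by norm_num)
  unfold NN; linarith

lemma cGpos (y : ℝ) : 0 < c0 - G y := lt_of_lt_of_le J_pos (key_lb y)

noncomputable def H (y : ℝ) : ℝ := y * (c0 - G y) - NN y

lemma hH_deriv (y : ℝ) : HasDerivAt H (c0 - G y) y := by
  have h1 : HasDerivAt (fun y => y * (c0 - G y)) (1 * (c0 - G y) + y * (0 - gg y)) y :=
    (hasDerivAt_id y).mul ((hasDerivAt_const y c0).sub (hG_deriv y))
  have h2 := h1.sub (hN_deriv y)
  refine h2.congr_deriv ?_; ring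

lemma H_cont : Continuous H :=
  continuous_iff_continuousAt.2 fun y => (hH_deriv y).continuousAt

lemma H_strictMono : StrictMono H := by
  apply strictMono_of_deriv_pos
  intro x
  rw [(hH_deriv x).deriv]
  exact cGpos x

lemma H_zero : H 0 = -4 := by
  unfold H NN G
  simp [Real.one_rpow]
  norm_num

lemma H_ex : ∃ y₀, 0 < y₀ ∧ H y₀ = 0 := by
  set J := ∫ τ in Set.Iic (0:ℝ), gg τ with hJ
  set R := 5 / J with hR
  have hRpos : 0 < R := div_pos (by norm_num) J_pos
  have hHR : 0 < H R := by
    have h1 : R * J ≤ R * (c0 - G R) :=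
      mul_le_mul_of_nonneg_left (key_lb R) hRpos.le
    have h2 : R * J = 5 := div_mul_cancel₀ 5 J_pos.ne'
    have := NN_le R
    unfold H; nlinarith
  obtain ⟨y₀, hy₀mem, hy₀⟩ := intermediate_value_Icc hRpos.le H_cont.continuousOn
    (show (0:ℝ) ∈ Set.Icc (H 0) (H R) by rw [H_zero]; constructor <;> linarith)
  refine ⟨y₀, ?_, hy₀⟩
  rcases hy₀mem.1.lt_or_eq with h | h
  · exact h
  · exfalso; rw [← h, H_zero] at hy₀; norm_num at hy₀

lemma phi_nonneg (y₀ : ℝ) (hy₀ : H y₀ = 0) (y : ℝ) (hy : 0 ≤ y) :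
    0 ≤ y₀ * (c0 - G y) - NN y := by
  set φ : ℝ → ℝ := fun y => y₀ * (c0 - G y) - NN y with hφ
  have hd : ∀ x, HasDerivAt φ ((x - y₀) * gg x) x := by
    intro x
    have h1 := (((hasDerivAt_const x c0).sub (hG_deriv x)).const_mul y₀).sub (hN_deriv x)
    refine h1.congr_deriv ?_; ring
  have hcont : Continuous φ := continuous_iff_continuousAt.2 fun x => (hd x).continuousAt
  have hφy₀ : φ y₀ = 0 := by
    have : H y₀ = y₀ * (c0 - G y₀) - NN y₀ := rfl
    rw [hφ]; dsimp; linarith [hy₀]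
  rcases le_total y y₀ with h | h
  · have hanti : AntitoneOn φ (Set.Icc y y₀) := by
      apply antitoneOn_of_deriv_nonpos (convex_Icc y y₀) hcont.continuousOn
      · intro x _; exact (hd x).differentiableAt.differentiableWithinAt
      · intro x hx
        rw [interior_Icc] at hx
        rw [(hd x).deriv]
        exact mul_nonpos_of_nonpos_of_nonneg (by linarith [hx.2]) (gg_pos x).le
    have := hanti (Set.left_mem_Icc.2 h) (Set.right_mem_Icc.2 h) h
    rw [hφy₀] at this; exact this
  · have hmono : MonotoneOn φ (Set.Icc y₀ y) := by
      apply monotoneOn_of_deriv_nonneg (convex_Icc y₀ y) hcont.continuousOn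
      · intro x _; exact (hd x).differentiableAt.differentiableWithinAt
      · intro x hx
        rw [interior_Icc] at hx
        rw [(hd x).deriv]
        exact mul_nonneg (by linarith [hx.1]) (gg_pos x).le
    have := hmono (Set.left_mem_Icc.2 h) (Set.right_mem_Icc.2 h) h
    rw [hφy₀] at this; exact this

/-- The maximum of `y ↦ (2+2(1+y²)^{-1/4})/(c₀ − G(y))` over `[0,∞)` is attained at the
unique positive solution `y₀` of `y₀(c₀ − G(y₀)) = 2+2(1+y₀²)^{-1/4}`, with maximal value `y₀`. -/
theorem max_average_slope :
    ∃ y₀ : ℝ, 0 < y₀ ∧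
      y₀ * (c0 - G y₀) = 2 + 2 * (1 + y₀ ^ 2) ^ (-(1/4) : ℝ) ∧
      (∀ y : ℝ, 0 < y → y * (c0 - G y) = 2 + 2 * (1 + y ^ 2) ^ (-(1/4) : ℝ) → y = y₀) ∧
      (∀ y ∈ Set.Ici (0:ℝ),
        (2 + 2 * (1 + y ^ 2) ^ (-(1/4) : ℝ)) / (c0 - G y)
          ≤ (2 + 2 * (1 + y₀ ^ 2) ^ (-(1/4) : ℝ)) / (c0 - G y₀)) ∧
      (2 + 2 * (1 + y₀ ^ 2) ^ (-(1/4) : ℝ)) / (c0 - G y₀) = y₀ := by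
  obtain ⟨y₀, hy₀pos, hy₀⟩ := H_ex
  have heq : y₀ * (c0 - G y₀) = NN y₀ := by
    have : H y₀ = y₀ * (c0 - G y₀) - NN y₀ := rfl
    linarith [hy₀, this ▸ hy₀]
  have hval : NN y₀ / (c0 - G y₀) = y₀ := by
    rw [← heq]; exact mul_div_cancel_right₀ y₀ (cGpos y₀).ne'
  refine ⟨y₀, hy₀pos, heq, ?_, ?_, hval⟩
  · intro y _ hyeq
    have hHy : H y = 0 := by
      have : H y = y * (c0 - G y) - NN y := rfl
      rw [this, hyeq]; unfold NN; ring
    exact H_strictMono.injective (hHy.trans hy₀.symm)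
  · intro y hy
    show NN y / (c0 - G y) ≤ NN y₀ / (c0 - G y₀)
    rw [hval]
    rw [div_le_iff₀ (cGpos y)]
    have := phi_nonneg y₀ hy₀ y hy
    linarith
end

section
/- Let u ∈ H²((-1,1);(0,∞)) be even with u(±1) = α > 0 and u'(±1) = 0, and suppose W(u) < 4π, where W is the Willmore energy of the surface of revolution generated by u. Then for all x ∈ [-1,1], |u'(x)| ≤ ((4π/W(u))² − 1)^(-1/2). -/
open MeasureTheory Real


lemma sqpos (p : ℝ) : (0:ℝ) < 1 + p^2 := by positivity

lemma rpos (p : ℝ) : 0 < Real.sqrt (1 + p^2) := Real.sqrt_pos.mpr (sqpos p)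

lemma rsq (p : ℝ) : Real.sqrt (1 + p^2) ^ 2 = 1 + p^2 := Real.sq_sqrt (sqpos p).le

lemma rpow_nth (p : ℝ) : (1 + p^2) ^ (-(3/2) : ℝ) = 1 / (Real.sqrt (1+p^2))^3 := by
  have hq := sqpos p
  rw [Real.rpow_neg hq.le, Real.sqrt_eq_rpow, ← Real.rpow_natCast ((1+p^2) ^ ((1:ℝ)/2)) 3,
    ← Real.rpow_mul hq.le]
  norm_num

lemma phi_deriv (u' u'' : ℝ → ℝ) (h : ∀ x, HasDerivAt u' (u'' x) x) (x : ℝ) :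
    HasDerivAt (fun y => u' y / Real.sqrt (1 + u' y ^ 2))
      (u'' x / (Real.sqrt (1 + u' x ^ 2))^3) x := by
  have hq := sqpos (u' x)
  have hr := rpos (u' x)
  have h1 : HasDerivAt (fun y => 1 + u' y ^ 2) (2 * u' x * u'' x) x := by
    have := ((h x).pow 2).const_add (1:ℝ)
    refine this.congr_deriv ?_
    ring
  have h2 := h1.sqrt (ne_of_gt hq)
  have h3 := (h x).fun_div h2 (ne_of_gt hr)
  refine h3.congr_deriv ?_
  have hr2 := rsq (u' x)
  field_simp
  linear_combination u'' x * hr2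

lemma r_one_le (p : ℝ) : 1 ≤ Real.sqrt (1 + p^2) := by
  nlinarith [rsq p, rpos p, sq_nonneg p, sq_nonneg (Real.sqrt (1+p^2) - 1)]

lemma pointwise_nonneg (a p b : ℝ) (ha : 0 ≤ a) :
    0 ≤ (1/(a * Real.sqrt (1+p^2)) - b * (1+p^2) ^ (-(3/2):ℝ))^2 * a * Real.sqrt (1+p^2) := by
  have := Real.sqrt_nonneg (1+p^2)
  positivity

lemma pointwise_key (a p b : ℝ) (ha : 0 < a) :
    -4 * (b / (Real.sqrt (1+p^2))^3) ≤
    (1/(a * Real.sqrt (1+p^2)) - b * (1+p^2) ^ (-(3/2):ℝ))^2 * a * Real.sqrt (1+p^2) := by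
  rw [rpow_nth]
  have hr := rpos p
  have hr2 := rsq p
  set r := Real.sqrt (1+p^2) with hrdef
  have key : (1/(a*r) - b*(1/r^3))^2 * a * r + 4*(b/r^3) = (a*b + r^2)^2/(a*r^5) := by
    field_simp; ring
  have h0 : 0 ≤ (a*b + r^2)^2/(a*r^5) := by positivity
  linarith [key]

lemma pointwise_dom (a p b m : ℝ) (hm : 0 < m) (ha : m ≤ a) :
    |b / (Real.sqrt (1+p^2))^3| ≤ 3/(2*m) +
      (1/(a * Real.sqrt (1+p^2)) - b * (1+p^2) ^ (-(3/2):ℝ))^2 * a * Real.sqrt (1+p^2) := by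
  rw [rpow_nth]
  have hr := rpos p
  have hr1 := r_one_le p
  set r := Real.sqrt (1+p^2) with hrdef
  have ha0 : 0 < a := lt_of_lt_of_le hm ha
  have habs : |b / r^3| = |b| / r^3 := by
    rw [abs_div, abs_pow, abs_of_nonneg hr.le]
  have e1 : 3/(2*(a*r)) + (1/(a*r) - b*(1/r^3))^2*a*r - |b|/r^3
      = (3*r^4 + 2*(r^2 - a*b)^2 - 2*(a*r^2*|b|))/(2*(a*r^5)) := by
    field_simp
  have e2 : 0 ≤ 3*r^4 + 2*(r^2 - a*b)^2 - 2*(a*r^2*|b|) := by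
    have h1 : a*|b| = |a*b| := by rw [abs_mul, abs_of_nonneg ha0.le]
    have e2' : a*r^2*|b| = r^2*|a*b| := by
      calc a*r^2*|b| = r^2*(a*|b|) := by ring
        _ = r^2*|a*b| := by rw [h1]
    nlinarith [sq_nonneg (|a*b| - 3/2*r^2), sq_abs (a*b), e2', mul_nonneg (sq_nonneg r) (sub_nonneg.mpr (le_abs_self (a*b)))]
  have e3 : 0 ≤ 3/(2*(a*r)) + (1/(a*r) - b*(1/r^3))^2*a*r - |b|/r^3 := by
    rw [e1]; positivity
  have e4 : 3/(2*(a*r)) ≤ 3/(2*m) := by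
    gcongr
    nlinarith
  calc |b / r^3| = |b|/r^3 := habs
    _ ≤ 3/(2*(a*r)) + (1/(a*r) - b*(1/r^3))^2*a*r := by linarith
    _ ≤ 3/(2*m) + (1/(a*r) - b*(1/r^3))^2*a*r := by linarith

/-- Lemma 3.2, first part: gradient bound for profile curves with Willmore energy below `4π`. -/
theorem willmore_gradient_bound (u u' u'' : ℝ → ℝ) (α : ℝ) (hα : 0 < α)
    (hu : ∀ x, HasDerivAt u (u' x) x)
    (hu' : ∀ x, HasDerivAt u' (u'' x) x)
    (hu'c : Continuous u')
    (hpos : ∀ x ∈ Set.Icc (-1:ℝ) 1, 0 < u x)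
    (heven : ∀ x, u x = u (-x))
    (hb1 : u 1 = α) (hb2 : u (-1) = α) (hb3 : u' 1 = 0) (hb4 : u' (-1) = 0)
    (hWint : IntervalIntegrable (fun x =>
        (1 / (u x * Real.sqrt (1 + u' x ^ 2)) - u'' x * (1 + u' x ^ 2) ^ (-(3/2) : ℝ)) ^ 2
          * u x * Real.sqrt (1 + u' x ^ 2)) volume (-1) 1)
    (hW : (π / 2) * ∫ x in (-1:ℝ)..1,
        (1 / (u x * Real.sqrt (1 + u' x ^ 2)) - u'' x * (1 + u' x ^ 2) ^ (-(3/2) : ℝ)) ^ 2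
          * u x * Real.sqrt (1 + u' x ^ 2) < 4 * π) :
    ∀ x ∈ Set.Icc (-1:ℝ) 1,
      |u' x| ≤ ((4 * π / ((π / 2) * ∫ x in (-1:ℝ)..1,
        (1 / (u x * Real.sqrt (1 + u' x ^ 2)) - u'' x * (1 + u' x ^ 2) ^ (-(3/2) : ℝ)) ^ 2
          * u x * Real.sqrt (1 + u' x ^ 2))) ^ 2 - 1) ^ (-(1/2) : ℝ) := by
  set F : ℝ → ℝ := fun x =>
      (1 / (u x * Real.sqrt (1 + u' x ^ 2)) - u'' x * (1 + u' x ^ 2) ^ (-(3/2) : ℝ)) ^ 2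
        * u x * Real.sqrt (1 + u' x ^ 2) with hFdef
  set I : ℝ := ∫ x in (-1:ℝ)..1, F x with hIdef
  -- basic facts
  have hpi := Real.pi_pos
  have hruniv : ∀ p : ℝ, 0 < Real.sqrt (1 + p^2) := rpos
  -- odd derivative
  have hodd : ∀ x, u' (-x) = -u' x := by
    intro x
    have hneg : HasDerivAt (fun y : ℝ => -y) (-1 : ℝ) x := by
      simpa using (hasDerivAt_id' x).fun_neg
    have h1 : HasDerivAt (fun y => u (-y)) (u' (-x) * (-1)) x := (hu (-x)).comp x hneg
    have h2 : (fun y => u (-y)) = u := funext fun y => (heven y).symm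
    rw [h2] at h1
    have := h1.unique (hu x)
    linarith
  -- derivative of phi
  have hphi : ∀ x, HasDerivAt (fun y => u' y / Real.sqrt (1 + u' y ^ 2))
      (u'' x / (Real.sqrt (1 + u' x ^ 2))^3) x := phi_deriv u' u'' hu'
  -- continuity of u
  have huc : Continuous u := continuous_iff_continuousAt.mpr fun x =>
    (hu x).differentiableAt.continuousAt
  -- minimum of u on Icc
  obtain ⟨z, hz, hzmin⟩ := isCompact_Icc.exists_isMinOn (Set.nonempty_Icc.mpr (by norm_num))
    (huc.continuousOn (s := Set.Icc (-1:ℝ) 1))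
  have hm : 0 < u z := hpos z hz
  -- measurability of phi'
  have hu''eq : u'' = deriv u' := funext fun x => ((hu' x).deriv).symm
  have hmeasu'' : Measurable u'' := hu''eq ▸ measurable_deriv u'
  have hrcont : Continuous (fun x => (Real.sqrt (1 + u' x ^ 2))^3) :=
    (Real.continuous_sqrt.comp (continuous_const.add (hu'c.pow 2))).pow 3
  have hphimeas : Measurable (fun x => u'' x / (Real.sqrt (1 + u' x ^ 2))^3) :=
    hmeasu''.div hrcont.measurable
  -- integrability of phi' on [-1,1]
  have hG : IntervalIntegrable (fun x => 3/(2 * u z) + F x) volume (-1) 1 :=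
    intervalIntegrable_const.add hWint
  have hphiint : IntervalIntegrable (fun x => u'' x / (Real.sqrt (1 + u' x ^ 2))^3)
      volume (-1) 1 := by
    refine hG.mono_fun hphimeas.aestronglyMeasurable ?_
    filter_upwards [MeasureTheory.self_mem_ae_restrict
      (measurableSet_uIoc : MeasurableSet (Set.uIoc (-1:ℝ) 1))] with y hy
    have hy' : y ∈ Set.Icc (-1:ℝ) 1 := by
      rw [Set.uIoc_of_le (by norm_num : (-1:ℝ) ≤ 1)] at hy
      exact Set.Ioc_subset_Icc_self hy
    have hdom := pointwise_dom (u y) (u' y) (u'' y) (u z) hm (hzmin hy')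
    have hFnn : 0 ≤ F y := pointwise_nonneg (u y) (u' y) (u'' y) (hpos y hy').le
    have h2 : (0:ℝ) < 3/(2*u z) := by positivity
    simp only [Real.norm_eq_abs]
    rw [abs_of_nonneg (by linarith : (0:ℝ) ≤ 3/(2*u z) + F y)]
    exact hdom
  -- lower bound on each sub-integral
  have piece : ∀ a b : ℝ, -1 ≤ a → a ≤ b → b ≤ 1 →
      -4 * (u' b / Real.sqrt (1 + u' b ^ 2) - u' a / Real.sqrt (1 + u' a ^ 2))
        ≤ ∫ x in a..b, F x := by
    intro a b ha hab hb
    have hsub : Set.uIcc a b ⊆ Set.uIcc (-1:ℝ) 1 := by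
      rw [Set.uIcc_of_le hab, Set.uIcc_of_le (by norm_num : (-1:ℝ) ≤ 1)]
      exact Set.Icc_subset_Icc ha hb
    have hFint := hWint.mono_set hsub
    have hpint := hphiint.mono_set hsub
    have hmono := intervalIntegral.integral_mono_on hab (hpint.const_mul (-4)) hFint
      (fun y hy => pointwise_key (u y) (u' y) (u'' y)
        (hpos y ⟨le_trans ha hy.1, le_trans hy.2 hb⟩))
    have hftc := intervalIntegral.integral_eq_sub_of_hasDerivAt
      (f := fun y => u' y / Real.sqrt (1 + u' y ^ 2))
      (f' := fun y => u'' y / (Real.sqrt (1 + u' y ^ 2))^3)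
      (fun y _ => hphi y) hpint
    rw [intervalIntegral.integral_const_mul, hftc] at hmono
    exact hmono
  -- nonnegativity of each sub-integral
  have piecepos : ∀ a b : ℝ, -1 ≤ a → a ≤ b → b ≤ 1 → 0 ≤ ∫ x in a..b, F x :=
    fun a b ha hab hb => intervalIntegral.integral_nonneg hab
      (fun y hy => pointwise_nonneg (u y) (u' y) (u'' y)
        (hpos y ⟨le_trans ha hy.1, le_trans hy.2 hb⟩).le)
  -- phi is odd, zero at endpoints
  have hphiodd : ∀ y : ℝ, u' (-y) / Real.sqrt (1 + u' (-y) ^ 2)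
      = -(u' y / Real.sqrt (1 + u' y ^ 2)) := by
    intro y
    rw [hodd y, neg_sq, neg_div]
  have hphi1 : u' 1 / Real.sqrt (1 + u' 1 ^ 2) = 0 := by rw [hb3]; simp
  have hphim1 : u' (-1) / Real.sqrt (1 + u' (-1) ^ 2) = 0 := by rw [hb4]; simp
  -- main estimate : I ≥ 8 |phi x|
  have main : ∀ x ∈ Set.Icc (-1:ℝ) 1, 8 * |u' x / Real.sqrt (1 + u' x ^ 2)| ≤ I := by
    intro x hx
    have ht0 : 0 ≤ |x| := abs_nonneg x
    have ht1 : |x| ≤ 1 := abs_le.mpr ⟨hx.1, hx.2⟩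
    have hnt : (-1:ℝ) ≤ -|x| := by linarith
    have hnt' : -|x| ≤ |x| := by linarith
    have hi1 : IntervalIntegrable F volume (-1) (-|x|) := hWint.mono_set (by
      rw [Set.uIcc_of_le hnt, Set.uIcc_of_le (by norm_num : (-1:ℝ) ≤ 1)]
      exact Set.Icc_subset_Icc le_rfl (by linarith))
    have hi2 : IntervalIntegrable F volume (-|x|) |x| := hWint.mono_set (by
      rw [Set.uIcc_of_le hnt', Set.uIcc_of_le (by norm_num : (-1:ℝ) ≤ 1)]
      exact Set.Icc_subset_Icc hnt ht1)
    have hi3 : IntervalIntegrable F volume |x| 1 := hWint.mono_set (by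
      rw [Set.uIcc_of_le ht1, Set.uIcc_of_le (by norm_num : (-1:ℝ) ≤ 1)]
      exact Set.Icc_subset_Icc (by linarith) le_rfl)
    have hsplit : (∫ y in (-1:ℝ)..(-|x|), F y) + (∫ y in (-|x|)..|x|, F y)
        + (∫ y in |x|..(1:ℝ), F y) = I := by
      rw [intervalIntegral.integral_add_adjacent_intervals hi1 hi2,
        intervalIntegral.integral_add_adjacent_intervals (hi1.trans hi2) hi3]
    have hA := piece (-1) (-|x|) le_rfl hnt (by linarith)
    have hB := piece |x| 1 (by linarith) ht1 le_rfl
    have hM := piece (-|x|) |x| hnt hnt' ht1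
    have hA0 := piecepos (-1) (-|x|) le_rfl hnt (by linarith)
    have hB0 := piecepos |x| 1 (by linarith) ht1 le_rfl
    have hM0 := piecepos (-|x|) |x| hnt hnt' ht1
    have hoddt := hphiodd |x|
    -- |phi x| = |phi |x||
    have heq : |u' x / Real.sqrt (1 + u' x ^ 2)| = |u' |x| / Real.sqrt (1 + u' |x| ^ 2)| := by
      rcases le_or_gt 0 x with h|h
      · rw [abs_of_nonneg h]
      · rw [abs_of_neg h, hphiodd x, abs_neg]
    rw [heq]
    rcases le_or_gt 0 (u' |x| / Real.sqrt (1 + u' |x| ^ 2)) with hc|hc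
    · rw [abs_of_nonneg hc]
      rw [hphim1] at hA
      rw [hphi1] at hB
      rw [hoddt] at hA
      linarith
    · rw [abs_of_neg hc]
      rw [hoddt] at hM
      linarith
  have hInn : 0 ≤ I := by
    have := main 0 (by norm_num)
    have h0 := abs_nonneg (u' 0 / Real.sqrt (1 + u' 0 ^ 2))
    linarith
  -- I is positive
  have hIpos : 0 < I := by
    rcases lt_or_eq_of_le hInn with h|h
    · exact h
    · exfalso
      have hu'0 : ∀ y ∈ Set.Icc (-1:ℝ) 1, u' y = 0 := by
        intro y hy
        have h8 := main y hy
        have habs : |u' y / Real.sqrt (1 + u' y ^ 2)| = 0 := by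
          have := abs_nonneg (u' y / Real.sqrt (1 + u' y ^ 2))
          linarith
        have hdiv := abs_eq_zero.mp habs
        rcases div_eq_zero_iff.mp hdiv with h'|h'
        · exact h'
        · exact absurd h' (rpos (u' y)).ne'
      have huconst : ∀ y ∈ Set.Icc (-1:ℝ) 1, u y = α := by
        intro y hy
        have hfi : IntervalIntegrable u' volume y 1 := hu'c.intervalIntegrable _ _
        have hftc := intervalIntegral.integral_eq_sub_of_hasDerivAt
          (f := u) (f' := u') (fun w _ => hu w) hfi
        have hzero : (∫ w in y..(1:ℝ), u' w) = 0 := by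
          rw [intervalIntegral.integral_congr (g := fun _ => (0:ℝ))
            (fun w hw => by
              apply hu'0 w
              rw [Set.uIcc_of_le hy.2] at hw
              exact ⟨le_trans hy.1 hw.1, hw.2⟩)]
          simp
        rw [hzero, hb1] at hftc
        linarith [hftc]

      have hu''0 : ∀ y ∈ Set.Ioo (-1:ℝ) 1, u'' y = 0 := by
        intro y hy
        have hev : u' =ᶠ[nhds y] (fun _ => (0:ℝ)) := by
          filter_upwards [Ioo_mem_nhds hy.1 hy.2] with w hw
          exact hu'0 w (Set.Ioo_subset_Icc_self hw)
        have hder : HasDerivAt u' 0 y :=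
          (hasDerivAt_const y (0:ℝ)).congr_of_eventuallyEq hev
        exact (hu' y).unique hder
      have hFval : ∀ y ∈ Set.Ioo (-1:ℝ) 1, F y = 1/α := by
        intro y hy
        have h1 := huconst y (Set.Ioo_subset_Icc_self hy)
        have h2 := hu'0 y (Set.Ioo_subset_Icc_self hy)
        have h3 := hu''0 y hy
        rw [hFdef]
        simp only [h1, h2, h3]
        rw [show (0:ℝ)^2 = 0 by ring]
        rw [add_zero, Real.sqrt_one]
        field_simp
        ring
      set g : ℝ → ℝ := fun y => if y ∈ Set.Ioo (-1:ℝ) 1 then 1/α else 0 with hgdef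
      have hgle : ∀ y ∈ Set.Icc (-1:ℝ) 1, g y ≤ F y := by
        intro y hy
        rw [hgdef]
        by_cases hmem : y ∈ Set.Ioo (-1:ℝ) 1
        · simp only [hmem, if_true]
          exact (hFval y hmem).ge
        · simp only [hmem, if_false]
          exact pointwise_nonneg (u y) (u' y) (u'' y) (hpos y hy).le
      have hgint : IntervalIntegrable g volume (-1) 1 := by
        refine (intervalIntegrable_const (c := 1/α)).mono_fun
          ((measurable_const.ite measurableSet_Ioo measurable_const).aestronglyMeasurable) ?_
        apply Filter.Eventually.of_forall
        intro y
        simp only [Real.norm_eq_abs, hgdef]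
        by_cases hmem : y ∈ Set.Ioo (-1:ℝ) 1 <;> simp [hmem] <;> positivity
      have hgval : (∫ y in (-1:ℝ)..1, g y) = 2/α := by
        have hone : ∀ᵐ (y:ℝ) ∂volume, y ≠ (1:ℝ) := by
          have : (volume : Measure ℝ) {(1:ℝ)} = 0 := Real.volume_singleton
          exact MeasureTheory.measure_eq_zero_iff_ae_notMem.mp this
        have hae : ∀ᵐ (y:ℝ) ∂volume, y ∈ Set.uIoc (-1:ℝ) 1 → g y = 1/α := by
          filter_upwards [hone] with y hy1 hy
          rw [Set.uIoc_of_le (by norm_num : (-1:ℝ) ≤ 1)] at hy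
          have : y ∈ Set.Ioo (-1:ℝ) 1 := ⟨hy.1, lt_of_le_of_ne hy.2 hy1⟩
          rw [hgdef]
          simp only [this, if_true]
        rw [intervalIntegral.integral_congr_ae hae]
        simp
        ring
      have hle : 2/α ≤ I := by
        rw [← hgval]
        exact intervalIntegral.integral_mono_on (by norm_num) hgint hWint hgle
      have : (0:ℝ) < 2/α := by positivity
      linarith
  -- final algebra
  intro x hx
  have h8 := main x hx
  have hWpos : 0 < (π/2) * I := mul_pos (by linarith) hIpos
  have hK1 : 1 < 4*π/((π/2)*I) := (one_lt_div hWpos).mpr hW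
  have hK2 : 0 < (4*π/((π/2)*I))^2 - 1 := by nlinarith
  set K := 4*π/((π/2)*I) with hKdef
  have hs4 : 4*π*|u' x / Real.sqrt (1 + u' x ^ 2)| ≤ (π/2)*I := by
    have hmul := mul_le_mul_of_nonneg_left h8 (le_of_lt (by linarith : (0:ℝ) < π/2))
    calc 4*π*|u' x / Real.sqrt (1 + u' x ^ 2)|
        = (π/2)*(8*|u' x / Real.sqrt (1 + u' x ^ 2)|) := by ring
      _ ≤ (π/2)*I := hmul
  have hKphi : K * |u' x / Real.sqrt (1 + u' x ^ 2)| ≤ 1 := by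
    rw [hKdef, div_mul_eq_mul_div, div_le_one hWpos]
    linarith [hs4]
  have hr := rpos (u' x)
  have habs : |u' x / Real.sqrt (1 + u' x ^ 2)| = |u' x| / Real.sqrt (1 + u' x ^ 2) := by
    rw [abs_div, abs_of_nonneg hr.le]
  rw [habs] at hKphi
  have hKu : K * |u' x| ≤ Real.sqrt (1 + u' x ^ 2) := by
    rw [← mul_div_assoc] at hKphi
    exact (div_le_one hr).mp hKphi
  have hsq : (K^2 - 1) * (u' x)^2 ≤ 1 := by
    have hKnn : 0 ≤ K := by linarith
    have h2 : (K * |u' x|)^2 ≤ (Real.sqrt (1 + u' x ^ 2))^2 :=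
      pow_le_pow_left₀ (mul_nonneg hKnn (abs_nonneg _)) hKu 2
    rw [rsq (u' x)] at h2
    have h3 : (K * |u' x|)^2 = K^2 * (u' x)^2 := by
      rw [mul_pow, sq_abs]
    nlinarith
  have hrw : (K^2-1) ^ (-(1/2):ℝ) = 1/Real.sqrt (K^2-1) := by
    rw [Real.rpow_neg hK2.le, Real.sqrt_eq_rpow, one_div]
    norm_num
  rw [hrw, le_div_iff₀ (Real.sqrt_pos.mpr hK2)]
  have hfin : |u' x| * Real.sqrt (K^2-1) = Real.sqrt ((u' x)^2 * (K^2-1)) := by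
    rw [Real.sqrt_mul (sq_nonneg _), Real.sqrt_sq_eq_abs]
  rw [hfin]
  rw [Real.sqrt_le_one]
  linarith [hsq]
end

section
/- Let u ∈ H²((-1,1);(0,∞)) satisfy u(±1) = α > 0, u'(±1) = 0, and |u'(x)| ≤ K on [-1,1] for some K > 0. Then for all x ∈ [-1,1], u(x) ≥ K/(exp((2K/π)√(1+K²) · W(u)) − 1), where W(u) = (π/2)∫_{-1}^1 u u''²(1+u'²)^(-5/2) dx + (π/2)∫_{-1}^1 (u√(1+u'²))^(-1) dx. -/
open MeasureTheory Real


lemma aux_int (m K x₀ : ℝ) (hm : 0 < m) (hK : 0 < K)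
    (hx₀ : x₀ ∈ Set.Icc (-1:ℝ) 1) (g : ℝ → ℝ)
    (hgint : IntervalIntegrable g volume (-1) 1)
    (hgnn : ∀ x ∈ Set.Icc (-1:ℝ) 1, 0 ≤ g x)
    (hg : ∀ x ∈ Set.Icc (-1:ℝ) 1, (m + K * |x - x₀|)⁻¹ ≤ g x) :
    K⁻¹ * Real.log ((m + K) / m) ≤ ∫ x in (-1:ℝ)..1, g x := by
  obtain ⟨hx₀l, hx₀r⟩ := hx₀
  have hlogval : K⁻¹ * (Real.log (m + K) - Real.log m) = K⁻¹ * Real.log ((m + K) / m) := by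
    rw [Real.log_div (by linarith) (by linarith)]
  rcases le_or_gt x₀ 0 with hc | hc
  · -- use interval [x₀, x₀+1]
    set a := x₀ with ha
    set b := x₀ + 1 with hb
    have hab : a ≤ b := by simp [ha, hb]
    have hsubI : Set.uIcc a b ⊆ Set.uIcc (-1:ℝ) 1 := by
      rw [Set.uIcc_of_le hab, Set.uIcc_of_le (by norm_num : (-1:ℝ) ≤ 1)]
      exact Set.Icc_subset_Icc (by linarith) (by simp [hb]; linarith)
    have hmem : ∀ x ∈ Set.Icc a b, x ∈ Set.Icc (-1:ℝ) 1 := by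
      intro x hx
      have := hsubI (by rw [Set.uIcc_of_le hab]; exact hx)
      rwa [Set.uIcc_of_le (by norm_num : (-1:ℝ) ≤ 1)] at this
    have hdpos : ∀ x ∈ Set.Icc a b, 0 < m + K * (x - x₀) := by
      intro x hx; nlinarith [hx.1]
    have hcont : ContinuousOn (fun x => (m + K * (x - x₀))⁻¹) (Set.Icc a b) := by
      apply ContinuousOn.inv₀
      · fun_prop
      · intro x hx; exact (hdpos x hx).ne'
    have hfi : IntervalIntegrable (fun x => (m + K * (x - x₀))⁻¹) volume a b := by
      apply ContinuousOn.intervalIntegrable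
      rwa [Set.uIcc_of_le hab]
    have hgi : IntervalIntegrable g volume a b := hgint.mono_set hsubI
    have hval : (∫ x in a..b, (m + K * (x - x₀))⁻¹)
        = K⁻¹ * Real.log ((m + K) / m) := by
      rw [intervalIntegral.integral_eq_sub_of_hasDerivAt
        (f := fun x => K⁻¹ * Real.log (m + K * (x - x₀)))
        (f' := fun x => (m + K * (x - x₀))⁻¹) ?_ hfi]
      · rw [← hlogval]; simp [ha, hb]; ring_nf
      · intro x hx
        rw [Set.uIcc_of_le hab] at hx
        have hd := hdpos x hx
        have h1 : HasDerivAt (fun x => m + K * (x - x₀)) K x := by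
          simpa using (((hasDerivAt_id x).sub_const x₀).const_mul K).const_add m
        have h2 := (h1.log hd.ne').const_mul K⁻¹
        refine h2.congr_deriv ?_
        rw [← mul_div_assoc, inv_mul_cancel₀ hK.ne', one_div]
    have h1 : (∫ x in a..b, (m + K * (x - x₀))⁻¹) ≤ ∫ x in a..b, g x := by
      apply intervalIntegral.integral_mono_on hab hfi hgi
      intro x hx
      have hx' := hmem x hx
      calc (m + K * (x - x₀))⁻¹ = (m + K * |x - x₀|)⁻¹ := by
            rw [abs_of_nonneg (by linarith [hx.1])]
        _ ≤ g x := hg x hx'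
    have h2 : (∫ x in a..b, g x) ≤ ∫ x in (-1:ℝ)..1, g x := by
      apply intervalIntegral.integral_mono_interval (by linarith : (-1:ℝ) ≤ a) hab
        (by simp [hb]; linarith)
      · filter_upwards [ae_restrict_mem measurableSet_Ioc] with x hx
        exact hgnn x ⟨hx.1.le, hx.2⟩
      · exact hgint
    linarith [hval ▸ h1]
  · -- use interval [x₀-1, x₀]
    set a := x₀ - 1 with ha
    set b := x₀ with hb
    have hab : a ≤ b := by simp [ha, hb]
    have hmem : ∀ x ∈ Set.Icc a b, x ∈ Set.Icc (-1:ℝ) 1 := by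
      intro x hx
      exact ⟨by simp [ha] at hx; linarith [hx.1], by linarith [hx.2]⟩
    have hdpos : ∀ x ∈ Set.Icc a b, 0 < m + K * (x₀ - x) := by
      intro x hx; nlinarith [hx.2]
    have hfi : IntervalIntegrable (fun x => (m + K * (x₀ - x))⁻¹) volume a b := by
      apply ContinuousOn.intervalIntegrable
      rw [Set.uIcc_of_le hab]
      apply ContinuousOn.inv₀
      · fun_prop
      · intro x hx; exact (hdpos x hx).ne'
    have hgi : IntervalIntegrable g volume a b :=
      hgint.mono_set (by
        rw [Set.uIcc_of_le hab, Set.uIcc_of_le (by norm_num : (-1:ℝ) ≤ 1)]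
        exact Set.Icc_subset_Icc (by simp [ha]; linarith) (by linarith))
    have hval : (∫ x in a..b, (m + K * (x₀ - x))⁻¹)
        = K⁻¹ * Real.log ((m + K) / m) := by
      rw [intervalIntegral.integral_eq_sub_of_hasDerivAt
        (f := fun x => -(K⁻¹ * Real.log (m + K * (x₀ - x))))
        (f' := fun x => (m + K * (x₀ - x))⁻¹) ?_ hfi]
      · rw [← hlogval]; simp [ha, hb]; ring_nf
      · intro x hx
        rw [Set.uIcc_of_le hab] at hx
        have hd := hdpos x hx
        have h1 : HasDerivAt (fun x => m + K * (x₀ - x)) (-K) x := by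
          have := (((hasDerivAt_id x).const_sub x₀).const_mul K).const_add m
          simpa using this
        have h2 := ((h1.log hd.ne').const_mul K⁻¹).neg
        convert h2 using 1
        · rfl
        · rw [neg_div, mul_neg, neg_neg, ← mul_div_assoc, inv_mul_cancel₀ hK.ne', one_div]
    have h1 : (∫ x in a..b, (m + K * (x₀ - x))⁻¹) ≤ ∫ x in a..b, g x := by
      apply intervalIntegral.integral_mono_on hab hfi hgi
      intro x hx
      have hx' := hmem x hx
      calc (m + K * (x₀ - x))⁻¹ = (m + K * |x - x₀|)⁻¹ := by
            rw [abs_sub_comm, abs_of_nonneg (by linarith [hx.2])]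
        _ ≤ g x := hg x hx'
    have h2 : (∫ x in a..b, g x) ≤ ∫ x in (-1:ℝ)..1, g x := by
      apply intervalIntegral.integral_mono_interval (by simp [ha]; linarith : (-1:ℝ) ≤ a)
        hab (by linarith : b ≤ 1)
      · filter_upwards [ae_restrict_mem measurableSet_Ioc] with x hx
        exact hgnn x ⟨hx.1.le, hx.2⟩
      · exact hgint
    linarith [hval ▸ h1]

/-- Lemma 3.2, second part: lower bound for profile curves with a Lipschitz bound `K`. -/
theorem willmore_lower_bound (u u' u'' : ℝ → ℝ) (α K : ℝ) (hα : 0 < α) (hK : 0 < K)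
    (hu : ∀ x, HasDerivAt u (u' x) x)
    (hu' : ∀ x, HasDerivAt u' (u'' x) x)
    (hu'c : Continuous u')
    (hpos : ∀ x ∈ Set.Icc (-1:ℝ) 1, 0 < u x)
    (hb1 : u 1 = α) (hb2 : u (-1) = α) (hb3 : u' 1 = 0) (hb4 : u' (-1) = 0)
    (hlip : ∀ x ∈ Set.Icc (-1:ℝ) 1, |u' x| ≤ K)
    (hint1 : IntervalIntegrable (fun x =>
        u x * u'' x ^ 2 * (1 + u' x ^ 2) ^ (-(5/2) : ℝ)) volume (-1) 1)
    (hint2 : IntervalIntegrable (fun x =>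
        (u x * Real.sqrt (1 + u' x ^ 2))⁻¹) volume (-1) 1) :
    ∀ x ∈ Set.Icc (-1:ℝ) 1,
      K / (Real.exp ((2 * K / π) * Real.sqrt (1 + K ^ 2) *
          ((π / 2) * (∫ x in (-1:ℝ)..1, u x * u'' x ^ 2 * (1 + u' x ^ 2) ^ (-(5/2) : ℝ))
            + (π / 2) * ∫ x in (-1:ℝ)..1, (u x * Real.sqrt (1 + u' x ^ 2))⁻¹)) - 1)
        ≤ u x := by
  intro x₀ hx₀
  set I₁ := ∫ x in (-1:ℝ)..1, u x * u'' x ^ 2 * (1 + u' x ^ 2) ^ (-(5/2) : ℝ) with hI₁def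
  set I₂ := ∫ x in (-1:ℝ)..1, (u x * Real.sqrt (1 + u' x ^ 2))⁻¹ with hI₂def
  have hm : 0 < u x₀ := hpos x₀ hx₀
  set m := u x₀ with hmdef
  set S := Real.sqrt (1 + K ^ 2) with hSdef
  have hS1 : 1 ≤ S := by
    have h := Real.sq_sqrt (show (0:ℝ) ≤ 1 + K ^ 2 by positivity)
    have h2 := Real.sqrt_nonneg (1 + K ^ 2)
    rw [hSdef]; nlinarith
  have hS0 : 0 < S := lt_of_lt_of_le one_pos hS1
  -- Lipschitz upper bound
  have hlipb : ∀ x ∈ Set.Icc (-1:ℝ) 1, u x ≤ m + K * |x - x₀| := by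
    intro x hx
    have h := Convex.norm_image_sub_le_of_norm_hasDerivWithin_le
      (f := u) (f' := u') (s := Set.Icc (-1:ℝ) 1) (C := K)
      (fun y _ => (hu y).hasDerivWithinAt)
      (fun y hy => by simpa [Real.norm_eq_abs] using hlip y hy)
      (convex_Icc _ _) hx₀ hx
    rw [Real.norm_eq_abs, Real.norm_eq_abs] at h
    have := le_abs_self (u x - m)
    linarith
  -- pointwise bound for the aux lemma
  have hg : ∀ x ∈ Set.Icc (-1:ℝ) 1,
      (m + K * |x - x₀|)⁻¹ ≤ S * (u x * Real.sqrt (1 + u' x ^ 2))⁻¹ := by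
    intro x hx
    have h1 : 0 < u x := hpos x hx
    have hsx : 0 < Real.sqrt (1 + u' x ^ 2) := Real.sqrt_pos.mpr (by positivity)
    have h2 : Real.sqrt (1 + u' x ^ 2) ≤ S := by
      apply Real.sqrt_le_sqrt
      have := hlip x hx
      nlinarith [sq_abs (u' x), abs_nonneg (u' x)]
    have hd1 : 0 < m + K * |x - x₀| := by positivity
    have prod_le : u x * Real.sqrt (1 + u' x ^ 2) ≤ (m + K * |x - x₀|) * S :=
      mul_le_mul (hlipb x hx) h2 hsx.le hd1.le
    have hinv : ((m + K * |x - x₀|) * S)⁻¹ ≤ (u x * Real.sqrt (1 + u' x ^ 2))⁻¹ :=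
      inv_anti₀ (mul_pos h1 hsx) prod_le
    calc (m + K * |x - x₀|)⁻¹ = S * ((m + K * |x - x₀|) * S)⁻¹ := by
          field_simp
      _ ≤ S * (u x * Real.sqrt (1 + u' x ^ 2))⁻¹ :=
          mul_le_mul_of_nonneg_left hinv hS0.le
  have haux := aux_int m K x₀ hm hK hx₀
    (fun x => S * (u x * Real.sqrt (1 + u' x ^ 2))⁻¹)
    (hint2.const_mul S)
    (fun x hx => by
      have := (hpos x hx).le
      positivity)
    hg
  rw [intervalIntegral.integral_const_mul] at haux
  -- haux : K⁻¹ * log ((m+K)/m) ≤ S * I₂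
  have hI1 : 0 ≤ I₁ := by
    rw [hI₁def]
    apply intervalIntegral.integral_nonneg (by norm_num : (-1:ℝ) ≤ 1)
    intro x hx
    have := (hpos x hx).le
    positivity
  have hπ : 0 < π := Real.pi_pos
  set c := (2 * K / π) * S * ((π / 2) * I₁ + (π / 2) * I₂) with hcdef
  have hceq : c = K * S * I₁ + K * (S * I₂) := by
    rw [hcdef]; field_simp
  have hlog : Real.log ((m + K) / m) ≤ c := by
    have h1 : Real.log ((m + K) / m) ≤ K * (S * I₂) := by
      have h2 := mul_le_mul_of_nonneg_left haux hK.le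
      calc Real.log ((m + K) / m) = K * (K⁻¹ * Real.log ((m + K) / m)) := by
            field_simp
        _ ≤ K * (S * I₂) := h2
    nlinarith [mul_nonneg (mul_nonneg hK.le hS0.le) hI1]
  have hratio : (m + K) / m ≤ Real.exp c := by
    rw [← Real.exp_log (show (0:ℝ) < (m + K) / m by positivity)]
    exact Real.exp_le_exp.mpr hlog
  have hKm : K / m ≤ Real.exp c - 1 := by
    have : (m + K) / m = 1 + K / m := by field_simp
    linarith [hratio, this ▸ hratio]
  have hE : 0 < Real.exp c - 1 := lt_of_lt_of_le (by positivity) hKm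
  rw [div_le_iff₀ hE]
  have := mul_le_mul_of_nonneg_left hKm hm.le
  rw [mul_div_cancel₀ _ hm.ne'] at this
  linarith
end

section
/- Let u ∈ C³([0,1]) solve weakly the inequality W'(u)(φ) ≥ 0 for all nonnegative φ ∈ H²₀(0,1), where W'(u)(φ) = 2∫₀¹ κ(x)/(1+u'(x)²) φ''(x) dx − 5∫₀¹ κ(x)²u'(x)/√(1+u'(x)²) φ'(x) dx and κ = u''(1+u'²)^(-3/2). Then, with V(x) := u''(x)(1+u'(x)²)^(-5/4), one has 0 ≥ ∫₀¹ φ'(x)·V'(x)(1+u'(x)²)^(-5/4) dx for all nonnegative φ ∈ H²₀(0,1). -/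
open MeasureTheory

/-- Proposition 2.10, first part: if `u` is a weak supersolution of the elastica equation,
then the auxiliary function `V = u''(1+u'²)^{-5/4}` is a weak subsolution of a second order
equation in divergence form. -/
theorem auxiliary_function_subsolution (u u' u'' u''' : ℝ → ℝ)
    (hu : ∀ x, HasDerivAt u (u' x) x)
    (hu' : ∀ x, HasDerivAt u' (u'' x) x)
    (hu'' : ∀ x, HasDerivAt u'' (u''' x) x)
    (hu'''c : Continuous u''')
    (hsuper : ∀ φ φ' φ'' : ℝ → ℝ,
      (∀ x, HasDerivAt φ (φ' x) x) → (∀ x, HasDerivAt φ' (φ'' x) x) → Continuous φ'' →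
      φ 0 = 0 → φ 1 = 0 → φ' 0 = 0 → φ' 1 = 0 → (∀ x ∈ Set.Icc (0:ℝ) 1, 0 ≤ φ x) →
      0 ≤ 2 * (∫ x in (0:ℝ)..1,
            (u'' x * (1 + u' x ^ 2) ^ (-(3/2) : ℝ)) / (1 + u' x ^ 2) * φ'' x)
          - 5 * ∫ x in (0:ℝ)..1,
            (u'' x * (1 + u' x ^ 2) ^ (-(3/2) : ℝ)) ^ 2 * u' x
              / Real.sqrt (1 + u' x ^ 2) * φ' x) :
    ∀ φ φ' φ'' : ℝ → ℝ,
      (∀ x, HasDerivAt φ (φ' x) x) → (∀ x, HasDerivAt φ' (φ'' x) x) → Continuous φ'' →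
      φ 0 = 0 → φ 1 = 0 → φ' 0 = 0 → φ' 1 = 0 → (∀ x ∈ Set.Icc (0:ℝ) 1, 0 ≤ φ x) →
      (∫ x in (0:ℝ)..1,
          φ' x * (deriv (fun y => u'' y * (1 + u' y ^ 2) ^ (-(5/4) : ℝ)) x
            * (1 + u' x ^ 2) ^ (-(5/4) : ℝ))) ≤ 0 := by
  intro φ φ' φ'' hφ hφ' hφ''c h0 h1 hp0 hp1 hpos
  have hQ : ∀ x : ℝ, (0:ℝ) < 1 + u' x ^ 2 := fun x => by positivity
  have hQne : ∀ x : ℝ, (1 + u' x ^ 2) ≠ 0 := fun x => (hQ x).ne'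
  -- continuity of u', u''
  have hu'c : Continuous u' := continuous_iff_continuousAt.mpr fun x => (hu' x).continuousAt
  have hu''c : Continuous u'' := continuous_iff_continuousAt.mpr fun x => (hu'' x).continuousAt
  have hφ'c : Continuous φ' := continuous_iff_continuousAt.mpr fun x => (hφ' x).continuousAt
  have hQc : Continuous (fun x : ℝ => 1 + u' x ^ 2) := continuous_const.add (hu'c.pow 2)
  have hQrc : ∀ r : ℝ, Continuous (fun x : ℝ => (1 + u' x ^ 2) ^ (r : ℝ)) := fun r =>
    hQc.rpow_const fun x => Or.inl (hQne x)
  -- derivative of 1 + u'^2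
  have hQd : ∀ x : ℝ, HasDerivAt (fun y => 1 + u' y ^ 2) (2 * u' x * u'' x) x := by
    intro x
    have h := ((hu' x).pow 2).const_add (1 : ℝ)
    refine h.congr_deriv ?_
    ring
  -- g = κ/(1+u'²) and its derivative
  set g : ℝ → ℝ := fun x => u'' x * (1 + u' x ^ 2) ^ (-(5/2) : ℝ) with hgdef
  set gd : ℝ → ℝ := fun x => u''' x * (1 + u' x ^ 2) ^ (-(5/2) : ℝ)
      + u'' x * (2 * u' x * u'' x * (-(5/2)) * (1 + u' x ^ 2) ^ (-(7/2) : ℝ)) with hgddef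
  have hg : ∀ x : ℝ, HasDerivAt g (gd x) x := by
    intro x
    have hr : HasDerivAt (fun y => (1 + u' y ^ 2) ^ (-(5/2) : ℝ))
        (2 * u' x * u'' x * (-(5/2)) * (1 + u' x ^ 2) ^ ((-(5/2) : ℝ) - 1)) x :=
      (hQd x).rpow_const (Or.inl (hQne x))
    have h := (hu'' x).mul hr
    refine h.congr_deriv ?_
    simp only [hgddef]
    norm_num
  -- V' = derivative of V = u''(1+u'²)^{-5/4}
  set Vd : ℝ → ℝ := fun x => u''' x * (1 + u' x ^ 2) ^ (-(5/4) : ℝ)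
      + u'' x * (2 * u' x * u'' x * (-(5/4)) * (1 + u' x ^ 2) ^ (-(9/4) : ℝ)) with hVddef
  have hV : ∀ x : ℝ, HasDerivAt (fun y => u'' y * (1 + u' y ^ 2) ^ (-(5/4) : ℝ)) (Vd x) x := by
    intro x
    have hr : HasDerivAt (fun y => (1 + u' y ^ 2) ^ (-(5/4) : ℝ))
        (2 * u' x * u'' x * (-(5/4)) * (1 + u' x ^ 2) ^ ((-(5/4) : ℝ) - 1)) x :=
      (hQd x).rpow_const (Or.inl (hQne x))
    have h := (hu'' x).mul hr
    refine h.congr_deriv ?_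
    simp only [hVddef]
    norm_num
  -- continuity facts
  have hgdc : Continuous gd := by
    apply Continuous.add
    · exact hu'''c.mul (hQrc _)
    · exact hu''c.mul ((((continuous_const.mul hu'c).mul hu''c).mul continuous_const).mul (hQrc _))
  have hk : Continuous (fun x : ℝ => (u'' x * (1 + u' x ^ 2) ^ (-(3/2) : ℝ)) ^ 2 * u' x
      / Real.sqrt (1 + u' x ^ 2)) := by
    apply Continuous.div
    · exact (((hu''c.mul (hQrc _)).pow 2).mul hu'c)
    · exact Real.continuous_sqrt.comp hQc
    · intro x
      exact Real.sqrt_ne_zero'.mpr (hQ x)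
  -- integration by parts
  have hparts := intervalIntegral.integral_mul_deriv_eq_deriv_mul
      (u := g) (v := φ') (u' := gd) (v' := φ'')
      (fun x _ => hg x) (fun x _ => hφ' x)
      (hgdc.intervalIntegrable 0 1) (hφ''c.intervalIntegrable 0 1)
  rw [hp0, hp1, mul_zero, mul_zero, sub_zero, zero_sub] at hparts
  -- identify the first integrand of hsuper with g * φ''
  have hA : (∫ x in (0:ℝ)..1,
        (u'' x * (1 + u' x ^ 2) ^ (-(3/2) : ℝ)) / (1 + u' x ^ 2) * φ'' x)
      = ∫ x in (0:ℝ)..1, g x * φ'' x := by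
    apply intervalIntegral.integral_congr
    intro x _
    have : (1 + u' x ^ 2) ^ (-(3/2) : ℝ) / (1 + u' x ^ 2)
        = (1 + u' x ^ 2) ^ (-(5/2) : ℝ) := by
      rw [show ((-(5/2)) : ℝ) = (-(3/2)) + (-1) by norm_num, Real.rpow_add (hQ x),
        Real.rpow_neg_one]
      rw [div_eq_mul_inv]
    simp only [hgdef]
    rw [mul_div_assoc, this]
  -- the supersolution inequality
  have H := hsuper φ φ' φ'' hφ hφ' hφ''c h0 h1 hp0 hp1 hpos
  rw [hA, hparts] at H
  -- rewrite deriv V as Vd in the goal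
  have hgoal : (∫ x in (0:ℝ)..1,
        φ' x * (deriv (fun y => u'' y * (1 + u' y ^ 2) ^ (-(5/4) : ℝ)) x
          * (1 + u' x ^ 2) ^ (-(5/4) : ℝ)))
      = ∫ x in (0:ℝ)..1, φ' x * (Vd x * (1 + u' x ^ 2) ^ (-(5/4) : ℝ)) := by
    apply intervalIntegral.integral_congr
    intro x _
    exact congrArg (fun t => φ' x * (t * (1 + u' x ^ 2) ^ (-(5/4) : ℝ))) (hV x).deriv
  rw [hgoal]
  -- combine integrals in H
  have hint1 : IntervalIntegrable (fun x => gd x * φ' x) volume 0 1 :=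
    (hgdc.mul hφ'c).intervalIntegrable 0 1
  have hint2 : IntervalIntegrable (fun x => (u'' x * (1 + u' x ^ 2) ^ (-(3/2) : ℝ)) ^ 2 * u' x
      / Real.sqrt (1 + u' x ^ 2) * φ' x) volume 0 1 :=
    (hk.mul hφ'c).intervalIntegrable 0 1
  have Hcomb : 2 * -(∫ x in (0:ℝ)..1, gd x * φ' x)
      - 5 * (∫ x in (0:ℝ)..1, (u'' x * (1 + u' x ^ 2) ^ (-(3/2) : ℝ)) ^ 2 * u' x
          / Real.sqrt (1 + u' x ^ 2) * φ' x)
      = ∫ x in (0:ℝ)..1, ((-2) * (gd x * φ' x)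
          - 5 * ((u'' x * (1 + u' x ^ 2) ^ (-(3/2) : ℝ)) ^ 2 * u' x
            / Real.sqrt (1 + u' x ^ 2) * φ' x)) := by
    rw [intervalIntegral.integral_sub (hint1.const_mul _) (hint2.const_mul _),
      intervalIntegral.integral_const_mul, intervalIntegral.integral_const_mul]
    ring
  rw [Hcomb] at H
  -- pointwise identity
  have hpt : ∀ x : ℝ, (-2) * (gd x * φ' x)
      - 5 * ((u'' x * (1 + u' x ^ 2) ^ (-(3/2) : ℝ)) ^ 2 * u' x
        / Real.sqrt (1 + u' x ^ 2) * φ' x)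
      = (-2) * (φ' x * (Vd x * (1 + u' x ^ 2) ^ (-(5/4) : ℝ))) := by
    intro x
    set q : ℝ := 1 + u' x ^ 2 with hqdef
    have hq : (0:ℝ) < q := hQ x
    have hsqrt : Real.sqrt q = q ^ ((1:ℝ)/2) := Real.sqrt_eq_rpow q
    have hsq : (q ^ (-(3/2) : ℝ)) ^ 2 = q ^ (-(3) : ℝ) := by
      rw [← Real.rpow_natCast (q ^ (-(3/2) : ℝ)) 2, ← Real.rpow_mul hq.le]
      norm_num
    have hinv : (q ^ ((1:ℝ)/2))⁻¹ = q ^ (-(1/2) : ℝ) := by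
      rw [← Real.rpow_neg hq.le]
    have e1 : q ^ (-(5/4) : ℝ) * q ^ (-(5/4) : ℝ) = q ^ (-(5/2) : ℝ) := by
      rw [← Real.rpow_add hq]; norm_num
    have e2 : q ^ (-(9/4) : ℝ) * q ^ (-(5/4) : ℝ) = q ^ (-(7/2) : ℝ) := by
      rw [← Real.rpow_add hq]; norm_num
    have e3 : q ^ (-(3) : ℝ) * q ^ (-(1/2) : ℝ) = q ^ (-(7/2) : ℝ) := by
      rw [← Real.rpow_add hq]; norm_num
    have hdiv : (u'' x * q ^ (-(3/2) : ℝ)) ^ 2 * u' x / Real.sqrt q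
        = u'' x ^ 2 * u' x * q ^ (-(7/2) : ℝ) := by
      rw [mul_pow, hsq, hsqrt, div_eq_mul_inv, hinv]
      linear_combination (u'' x ^ 2 * u' x) * e3
    simp only [hgddef, hVddef]
    linear_combination (2 * u''' x * φ' x) * e1
      + (-5 * u'' x ^ 2 * u' x * φ' x) * e2 + (-5 * φ' x) * hdiv
  rw [intervalIntegral.integral_congr (fun x _ => hpt x)] at H
  rw [intervalIntegral.integral_const_mul] at H
  linarith
end
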